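/- arXiv:2007.14123 — 7 statements merged into one kernel-verified Lean document; each statement's English description precedes it below -/
import Mathlib

section
/- Let R be a finite commutative chain ring whose residue field has q elements, and let n be a positive integer with gcd(n,q)=1. Then the determinant map from the ring of n×n circulant matrices over R to R is surjective; i.e., for every c in R there exists a circulant matrix A over R with det(A) = c. -/
/-- Over a commutative finite chain ring `R` with residue field of size `q`, if `gcd(n, q) = 1`
then the determinant map on `n × n` circulant matrices over `R` is surjective. -/
theorem det_circulant_surjective_of_chainRing {R : Type*} [CommRing R] [Finite R] [IsLocalRing R]
    (hchain : ∀ I J : Ideal R, I ≤ J ∨ J ≤ I)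
    (q n : ℕ) (hq : Nat.card (R ⧸ IsLocalRing.maximalIdeal R) = q)
    [NeZero n] (hgcd : Nat.gcd n q = 1) :
    ∀ c : R, ∃ v : ZMod n → R, (Matrix.circulant v).det = c := by
  classical
  -- Step 1: (n : R) is a unit
  have hq' : Nat.card (IsLocalRing.ResidueField R) = q := hq
  set κ := IsLocalRing.ResidueField R with hκ
  haveI : Finite κ := Finite.of_surjective _ Ideal.Quotient.mk_surjective
  haveI : Fintype κ := Fintype.ofFinite κ
  set p := ringChar κ with hp
  haveI : CharP κ p := ringChar.charP κ
  have hpprime : p.Prime := CharP.char_is_prime κ p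
  haveI : Fact p.Prime := ⟨hpprime⟩
  obtain ⟨k, -, hcard⟩ := FiniteField.card κ p
  have hqpk : q = p ^ (k : ℕ) := by
    rw [← hq', Nat.card_eq_fintype_card, hcard]
  have hun : IsUnit (n : R) := by
    rw [← IsLocalRing.notMem_maximalIdeal]
    intro hmem
    have h0 : IsLocalRing.residue R ((n : ℕ) : R) = 0 :=
      (Ideal.Quotient.eq_zero_iff_mem).2 hmem
    rw [map_natCast] at h0
    have hdvd : p ∣ n := (CharP.cast_eq_zero_iff κ p n).1 h0
    have hdvdq : p ∣ q := hqpk ▸ dvd_pow_self p (by positivity)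
    have h1 : p ∣ 1 := hgcd ▸ Nat.dvd_gcd hdvd hdvdq
    exact hpprime.one_lt.ne' (Nat.dvd_one.1 h1)
  obtain ⟨u, hu⟩ := hun
  intro c
  set b : R := (c - 1) * (↑u⁻¹ : R) with hb
  refine ⟨Pi.single 0 1 + fun _ => b, ?_⟩
  rw [Matrix.circulant_add, Matrix.circulant_single_one]
  have hJ : Matrix.circulant (fun _ => b : ZMod n → R)
      = Matrix.replicateCol Unit (fun _ => b : ZMod n → R) * Matrix.replicateRow Unit (fun _ => (1:R) : ZMod n → R) := by
    ext i j
    simp [Matrix.circulant_apply, Matrix.mul_apply]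
  rw [hJ, Matrix.det_one_add_replicateCol_mul_replicateRow]
  have hsum : dotProduct (fun _ => (1:R) : ZMod n → R) (fun _ => b : ZMod n → R) = n * b := by
    simp [dotProduct, Finset.sum_const, ZMod.card, nsmul_eq_mul]
  rw [hsum, hb]
  have h2 : (n : R) * ((c - 1) * ↑u⁻¹) = (c - 1) * ((n : R) * ↑u⁻¹) := by ring
  rw [h2, ← hu, Units.mul_inv, mul_one]
  ring
end

section
/- Let R = Z/p^e Z with p prime and e ≥ 1, and let n ≥ 1. The number of n-tuples (a_1,...,a_n) ∈ R^n with a_1·a_2⋯a_n = 0 equals p^(ne) - (p-1)^n · p^((e-1)n) · Σ_{i=0}^{e-1} C(n+i-1, n-1) · p^(-i). -/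
open Finset

lemma aux_count (n : ℕ) (c : Fin n → ℕ) (j : Fin n) :
    (∑ i, c i • ({i} : Multiset (Fin n))).count j = c j := by
  simp [Multiset.count_sum', Multiset.count_singleton]

-- stars and bars
lemma aux_card_adT (n s : ℕ) (hn : 1 ≤ n) :
    (Finset.Nat.antidiagonalTuple n s).card = (n + s - 1).choose (n - 1) := by
  have e2 : {c : Fin n → ℕ // ∑ i, c i = s} ≃ Sym (Fin n) s := by
    refine
      { toFun := fun c => ⟨∑ i, (c.1 i) • ({i} : Multiset (Fin n)), ?_⟩
        invFun := fun m => ⟨fun i => m.1.count i, ?_⟩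
        left_inv := ?_, right_inv := ?_ }
    · rw [← Multiset.sum_count_eq_card (fun a _ => Finset.mem_univ a)]
      simp only [aux_count]
      exact c.2
    · have := m.2
      rw [← Multiset.sum_count_eq_card (fun a _ => Finset.mem_univ a)] at this
      exact this
    · intro c
      ext i
      exact aux_count n c.1 i
    · intro m
      apply Subtype.ext
      dsimp
      ext j
      rw [aux_count]
  have h1 : (Finset.Nat.antidiagonalTuple n s).card
      = Nat.card {c : Fin n → ℕ // c ∈ Finset.Nat.antidiagonalTuple n s} := by
    rw [Nat.card_eq_finsetCard]
  rw [h1, Nat.card_congr ((Equiv.subtypeEquivRight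
      (fun c => Finset.Nat.mem_antidiagonalTuple)).trans e2),
    Nat.card_eq_fintype_card, Sym.card_sym_fin_eq_multichoose, Nat.multichoose_eq]
  have : n + s - 1 - s = n - 1 := by omega
  rw [← this, Nat.choose_symm (by omega)]

lemma aux_card_val (p e j : ℕ) (hp : p.Prime) (hj : j < e) :
    ((Finset.range (p ^ e)).filter (fun a => a ≠ 0 ∧ padicValNat p a = j)).card
      = (p - 1) * p ^ (e - 1 - j) := by
  haveI : Fact p.Prime := ⟨hp⟩
  have hp1 := hp.one_lt
  have hcop : ((Finset.range (p ^ (e - j))).filter (fun b => ¬ p ∣ b)).card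
      = p ^ (e - j - 1) * (p - 1) := by
    have heq : ((Finset.range (p ^ (e - j))).filter (fun b => ¬ p ∣ b))
        = (Finset.range (p ^ (e - j))).filter (Nat.Coprime (p ^ (e - j))) := by
      ext b
      simp only [Finset.mem_filter, Finset.mem_range, and_congr_right_iff]
      intro _
      exact ⟨fun h => Nat.Coprime.pow_left _ (hp.coprime_iff_not_dvd.2 h),
        fun h => hp.coprime_iff_not_dvd.1 ((Nat.coprime_pow_left_iff (show 0 < e - j by omega) p b).1 h)⟩
    rw [heq, ← Nat.totient, Nat.totient_prime_pow hp (by omega)]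
  rw [mul_comm, show e - 1 - j = e - j - 1 by omega, ← hcop]
  apply Finset.card_bij (fun a _ => a / p ^ j)
  · intro a ha
    simp only [Finset.mem_filter, Finset.mem_range] at ha ⊢
    obtain ⟨hlt, hne, hval⟩ := ha
    have hdvd : p ^ j ∣ a := by rw [← hval]; exact pow_padicValNat_dvd
    constructor
    · rw [Nat.div_lt_iff_lt_mul (pow_pos hp.pos j), ← pow_add]
      have : e - j + j = e := by omega
      rwa [this]
    · intro hpd
      have : p ^ (j + 1) ∣ a := by
        obtain ⟨b, rfl⟩ := hdvd
        rw [Nat.mul_div_cancel_left _ (pow_pos hp.pos j)] at hpd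
        obtain ⟨c, rfl⟩ := hpd
        ring_nf
        exact ⟨c, by ring⟩
      rw [padicValNat_dvd_iff_le hne] at this
      omega
  · intro a ha b hb hab
    simp only [Finset.mem_filter, Finset.mem_range] at ha hb
    have hda : p ^ j ∣ a := by rw [← ha.2.2]; exact pow_padicValNat_dvd
    have hdb : p ^ j ∣ b := by rw [← hb.2.2]; exact pow_padicValNat_dvd
    rw [← Nat.div_mul_cancel hda, ← Nat.div_mul_cancel hdb, hab]
  · intro b hb
    simp only [Finset.mem_filter, Finset.mem_range] at hb
    have hb0 : b ≠ 0 := fun h => hb.2 (h ▸ dvd_zero p)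
    refine ⟨b * p ^ j, ?_, ?_⟩
    · simp only [Finset.mem_filter, Finset.mem_range]
      refine ⟨?_, ?_, ?_⟩
      · calc b * p ^ j < p ^ (e - j) * p ^ j :=
              (Nat.mul_lt_mul_right (pow_pos hp.pos j)).2 hb.1
          _ = p ^ e := by rw [← pow_add]; congr 1; omega
      · positivity
      · rw [padicValNat.mul hb0 (pow_ne_zero j hp.pos.ne'), padicValNat.prime_pow,
          padicValNat.eq_zero_of_not_dvd hb.2, zero_add]
    · rw [Nat.mul_div_cancel _ (pow_pos hp.pos j)]

lemma aux_card_zmod (p e j : ℕ) (hp : p.Prime) [NeZero (p ^ e)] (hj : j < e) :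
    (Finset.univ.filter (fun x : ZMod (p ^ e) => x ≠ 0 ∧ padicValNat p x.val = j)).card
      = ((Finset.range (p ^ e)).filter (fun a => a ≠ 0 ∧ padicValNat p a = j)).card := by
  apply Finset.card_bij (fun x _ => x.val)
  · intro x hx
    simp only [Finset.mem_filter, Finset.mem_univ, true_and] at hx
    simp only [Finset.mem_filter, Finset.mem_range]
    exact ⟨ZMod.val_lt x, fun h => hx.1 ((ZMod.val_eq_zero x).1 h), hx.2⟩
  · intro a _ b _ hab
    exact ZMod.val_injective _ hab
  · intro a ha
    simp only [Finset.mem_filter, Finset.mem_range] at ha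
    refine ⟨(a : ZMod (p ^ e)), ?_, ?_⟩
    · simp only [Finset.mem_filter, Finset.mem_univ, true_and]
      rw [ZMod.val_cast_of_lt ha.1]
      refine ⟨fun h => ha.2.1 ?_, ha.2.2⟩
      rw [← ZMod.val_cast_of_lt ha.1, h, ZMod.val_zero]
    · exact ZMod.val_cast_of_lt ha.1

lemma aux_padic_prod (p : ℕ) (hp : p.Prime) {n : ℕ} (f : Fin n → ℕ)
    (hf : ∀ i, f i ≠ 0) :
    padicValNat p (∏ i, f i) = ∑ i, padicValNat p (f i) := by
  haveI : Fact p.Prime := ⟨hp⟩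
  induction n with
  | zero => simp
  | succ m ih =>
    rw [Fin.prod_univ_succ, Fin.sum_univ_succ,
      padicValNat.mul (hf 0) (Finset.prod_ne_zero_iff.2 fun i _ => hf i.succ),
      ih _ (fun i => hf i.succ)]

lemma aux_prod_ne_zero (p e n : ℕ) (hp : p.Prime) [NeZero (p ^ e)]
    (v : Fin n → ZMod (p ^ e)) :
    ∏ i, v i ≠ 0 ↔ (∀ i, v i ≠ 0) ∧ ∑ i, padicValNat p (v i).val < e := by
  haveI : Fact p.Prime := ⟨hp⟩
  have h1 : ∏ i, v i = ((∏ i, (v i).val : ℕ) : ZMod (p ^ e)) := by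
    rw [Nat.cast_prod]
    congr 1
    ext i
    rw [ZMod.natCast_val, ZMod.cast_id]
  rw [h1, Ne, ZMod.natCast_eq_zero_iff]
  constructor
  · intro h
    have hne : ∀ i, (v i).val ≠ 0 := by
      intro i h0
      exact h (by rw [Finset.prod_eq_zero (Finset.mem_univ i) h0]; exact dvd_zero _)
    have hprod : (∏ i, (v i).val) ≠ 0 := Finset.prod_ne_zero_iff.2 fun i _ => hne i
    rw [padicValNat_dvd_iff_le hprod, aux_padic_prod p hp _ hne] at h
    exact ⟨fun i h0 => hne i (by rw [h0, ZMod.val_zero]), by omega⟩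
  · rintro ⟨h0, hlt⟩ hdvd
    have hne : ∀ i, (v i).val ≠ 0 := fun i h => h0 i ((ZMod.val_eq_zero _).1 h)
    have hprod : (∏ i, (v i).val) ≠ 0 := Finset.prod_ne_zero_iff.2 fun i _ => hne i
    rw [padicValNat_dvd_iff_le hprod, aux_padic_prod p hp _ hne] at hdvd
    omega

/-- For `R = ℤ/p^e ℤ` with `p` prime, `e ≥ 1` and `n ≥ 1`, the number of `n`-tuples over `R`
with product `0` equals `p^(ne) - (p-1)^n · Σ_{i=0}^{e-1} C(n+i-1, n-1) · p^((e-1)n - i)`. -/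
theorem card_tuples_prod_zero_zmod (p e n : ℕ) (hp : p.Prime) (he : 1 ≤ e) (hn : 1 ≤ n) :
    Nat.card {v : Fin n → ZMod (p ^ e) // ∏ i, v i = 0} =
      p ^ (n * e) - (p - 1) ^ n *
        ∑ i ∈ Finset.range e, Nat.choose (n + i - 1) (n - 1) * p ^ ((e - 1) * n - i) := by
  haveI : NeZero (p ^ e) := ⟨pow_ne_zero e hp.pos.ne'⟩
  haveI : Fact p.Prime := ⟨hp⟩
  have key : (Finset.univ.filter (fun v : Fin n → ZMod (p ^ e) => ¬ ∏ i, v i = 0)).card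
      = (p - 1) ^ n *
        ∑ i ∈ Finset.range e, Nat.choose (n + i - 1) (n - 1) * p ^ ((e - 1) * n - i) := by
    have hA : (Finset.univ.filter (fun v : Fin n → ZMod (p ^ e) => ¬ ∏ i, v i = 0))
        = Finset.univ.filter
            (fun v : Fin n → ZMod (p ^ e) =>
              (∀ i, v i ≠ 0) ∧ ∑ i, padicValNat p (v i).val < e) := by
      ext v
      simp only [Finset.mem_filter, Finset.mem_univ, true_and]
      exact aux_prod_ne_zero p e n hp v
    have hdisj : (↑(Finset.range e) : Set ℕ).PairwiseDisjoint
        (fun s => Finset.Nat.antidiagonalTuple n s) := by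
      intro a _ b _ hab
      refine Finset.disjoint_left.2 fun c hca hcb => hab ?_
      rw [← Finset.Nat.mem_antidiagonalTuple.1 hca, ← Finset.Nat.mem_antidiagonalTuple.1 hcb]
    rw [hA, Finset.card_eq_sum_card_fiberwise
        (f := fun v (i : Fin n) => padicValNat p (v i).val)
        (t := (Finset.range e).biUnion (fun s => Finset.Nat.antidiagonalTuple n s))
        (fun v hv => by
          simp only [Finset.mem_coe, Finset.mem_filter, Finset.mem_univ, true_and] at hv
          exact Finset.mem_biUnion.2 ⟨∑ i, padicValNat p (v i).val,
            Finset.mem_range.2 hv.2, Finset.Nat.mem_antidiagonalTuple.2 rfl⟩),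
      Finset.sum_biUnion hdisj]
    have hinner : ∀ s ∈ Finset.range e,
        (∑ c ∈ Finset.Nat.antidiagonalTuple n s,
          ((Finset.univ.filter (fun v : Fin n → ZMod (p ^ e) =>
              (∀ i, v i ≠ 0) ∧ ∑ i, padicValNat p (v i).val < e)).filter
            (fun v => (fun i => padicValNat p (v i).val) = c)).card)
        = (n + s - 1).choose (n - 1) * ((p - 1) ^ n * p ^ ((e - 1) * n - s)) := by
      intro s hs
      rw [Finset.mem_range] at hs
      have hconst : ∀ c ∈ Finset.Nat.antidiagonalTuple n s,
          ((Finset.univ.filter (fun v : Fin n → ZMod (p ^ e) =>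
              (∀ i, v i ≠ 0) ∧ ∑ i, padicValNat p (v i).val < e)).filter
            (fun v => (fun i => padicValNat p (v i).val) = c)).card
          = (p - 1) ^ n * p ^ ((e - 1) * n - s) := by
        intro c hc
        have hcs : ∑ i, c i = s := Finset.Nat.mem_antidiagonalTuple.1 hc
        have hci : ∀ i, c i ≤ e - 1 := by
          intro i
          have : c i ≤ ∑ i, c i := Finset.single_le_sum (fun j _ => Nat.zero_le _)
            (Finset.mem_univ i)
          omega
        have hfib : ((Finset.univ.filter (fun v : Fin n → ZMod (p ^ e) =>
              (∀ i, v i ≠ 0) ∧ ∑ i, padicValNat p (v i).val < e)).filter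
            (fun v => (fun i => padicValNat p (v i).val) = c))
            = Fintype.piFinset (fun i => Finset.univ.filter
                (fun x : ZMod (p ^ e) => x ≠ 0 ∧ padicValNat p x.val = c i)) := by
          ext v
          simp only [Finset.mem_filter, Finset.mem_univ, true_and, Fintype.mem_piFinset,
            funext_iff]
          constructor
          · rintro ⟨⟨h0, -⟩, hval⟩
            exact fun i => ⟨h0 i, hval i⟩
          · intro h
            refine ⟨⟨fun i => (h i).1, ?_⟩, fun i => (h i).2⟩
            have : ∑ i, padicValNat p (v i).val = ∑ i, c i :=
              Finset.sum_congr rfl fun i _ => (h i).2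
            omega
        rw [hfib, Fintype.card_piFinset]
        have hcard : ∀ i : Fin n,
            (Finset.univ.filter
              (fun x : ZMod (p ^ e) => x ≠ 0 ∧ padicValNat p x.val = c i)).card
            = (p - 1) * p ^ (e - 1 - c i) := by
          intro i
          have hcie := hci i
          rw [aux_card_zmod p e (c i) hp (by omega), aux_card_val p e (c i) hp (by omega)]
        rw [Finset.prod_congr rfl fun i _ => hcard i, Finset.prod_mul_distrib,
          Finset.prod_const, Finset.card_univ, Fintype.card_fin, Finset.prod_pow_eq_pow_sum]
        congr 1
        congr 1
        have hsum : (∑ i, (e - 1 - c i)) + ∑ i, c i = (e - 1) * n := by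
          rw [← Finset.sum_add_distrib,
            Finset.sum_congr rfl fun i _ => Nat.sub_add_cancel (hci i), Finset.sum_const,
            Finset.card_univ, Fintype.card_fin, smul_eq_mul, mul_comm]
        omega
      rw [Finset.sum_congr rfl hconst, Finset.sum_const, aux_card_adT n s hn, smul_eq_mul]
    rw [Finset.mul_sum]
    refine Finset.sum_congr rfl fun s hs => (hinner s hs).trans (by ring)
  rw [Nat.card_eq_fintype_card, Fintype.card_subtype]
  have htot := Finset.card_filter_add_card_filter_not
    (s := (Finset.univ : Finset (Fin n → ZMod (p ^ e))))
    (p := fun v => ∏ i, v i = 0)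
  rw [Finset.card_univ, Fintype.card_fun, ZMod.card, Fintype.card_fin, ← pow_mul,
    mul_comm e n, key] at htot
  exact Nat.eq_sub_of_add_eq htot
end

section
/- Let R = Z/p^e Z with p prime and e ≥ 2, let 1 ≤ s < e, and let n ≥ 1. The number of n-tuples (a_1,...,a_n) ∈ R^n with a_1⋯a_n = p^s (as an element of Z/p^e Z) equals p^((e-1)(n-1)) · (p-1)^(n-1) · C(n+s-1, n-1). -/
namespace CardTuplesAux

variable {p e : ℕ}

lemma cast_pow_e_eq_zero (p e : ℕ) : ((p : ZMod (p ^ e)) : ZMod (p ^ e)) ^ e = 0 := by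
  have : ((p ^ e : ℕ) : ZMod (p ^ e)) = 0 := ZMod.natCast_self _
  push_cast at this
  exact this

lemma natCast_val_self {n : ℕ} [NeZero n] (x : ZMod n) : ((x.val : ℕ) : ZMod n) = x := by
  rw [ZMod.natCast_val, ZMod.cast_id]

/-- `p^a * x = 0` in `ZMod (p^e)` iff `p^(e-a) ∣ x`, for `a ≤ e`, `p` prime. -/
lemma pk_mul_eq_zero_iff [NeZero (p ^ e)] (hp : p.Prime) {a : ℕ} (ha : a ≤ e)
    (x : ZMod (p ^ e)) :
    (p : ZMod (p ^ e)) ^ a * x = 0 ↔ (p : ZMod (p ^ e)) ^ (e - a) ∣ x := by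
  constructor
  · intro h
    have hx : (((p ^ a * x.val : ℕ)) : ZMod (p ^ e)) = 0 := by
      push_cast
      rw [natCast_val_self]
      exact h
    rw [ZMod.natCast_eq_zero_iff] at hx
    have hsplit : p ^ e = p ^ a * p ^ (e - a) := by
      rw [← pow_add]; congr 1; omega
    obtain ⟨c, hc⟩ := hx
    have hc' : p ^ a * x.val = p ^ a * (p ^ (e - a) * c) := by
      rw [hc, hsplit, mul_assoc]
    have hc2 : x.val = p ^ (e - a) * c := Nat.eq_of_mul_eq_mul_left (pow_pos hp.pos a) hc' 
    refine ⟨(c : ZMod (p ^ e)), ?_⟩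
    have : ((x.val : ℕ) : ZMod (p ^ e)) = ((p ^ (e - a) * c : ℕ) : ZMod (p ^ e)) := by
      rw [hc2]
    rw [natCast_val_self] at this
    push_cast at this
    exact this
  · rintro ⟨t, rfl⟩
    rw [← mul_assoc, ← pow_add]
    have : a + (e - a) = e := by omega
    rw [this, cast_pow_e_eq_zero, zero_mul]

lemma not_p_dvd_unit [NeZero (p ^ e)] (hp : p.Prime) (he : 1 ≤ e) (u : (ZMod (p ^ e))ˣ) :
    ¬ (p : ZMod (p ^ e)) ∣ (u : ZMod (p ^ e)) := by
  intro h
  have hu : IsUnit ((p : ℕ) : ZMod (p ^ e)) := isUnit_of_dvd_unit h u.isUnit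
  rw [ZMod.isUnit_iff_coprime] at hu
  have hd : p ∣ p ^ e := dvd_pow_self p (by omega)
  exact hp.one_lt.ne' (Nat.Coprime.eq_one_of_dvd hu hd)

/-- Core nonvanishing lemma: `p^j * (u - p*t) ≠ 0` for `j < e` and `u` a unit. -/
lemma pj_unit_sub_ne [NeZero (p ^ e)] (hp : p.Prime) {j : ℕ} (hj : j < e)
    (u : (ZMod (p ^ e))ˣ) (t : ZMod (p ^ e)) :
    (p : ZMod (p ^ e)) ^ j * ((u : ZMod (p ^ e)) - p * t) ≠ 0 := by
  intro h
  rw [pk_mul_eq_zero_iff hp hj.le] at h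
  have h1 : (p : ZMod (p ^ e)) ∣ (p : ZMod (p ^ e)) ^ (e - j) :=
    dvd_pow_self _ (by omega)
  have h2 : (p : ZMod (p ^ e)) ∣ ((u : ZMod (p ^ e)) - p * t) := h1.trans h
  have h3 : (p : ZMod (p ^ e)) ∣ (u : ZMod (p ^ e)) := by
    have := dvd_add h2 (Dvd.intro t rfl)
    simpa using this
  exact not_p_dvd_unit hp (by omega) u h3

lemma pm_unit_ne_zero [NeZero (p ^ e)] (hp : p.Prime) {m : ℕ} (hm : m < e)
    (u : (ZMod (p ^ e))ˣ) : (p : ZMod (p ^ e)) ^ m * (u : ZMod (p ^ e)) ≠ 0 := by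
  have := pj_unit_sub_ne hp hm u 0
  simpa using this

lemma val_lt_ne [NeZero (p ^ e)] (hp : p.Prime) {a b : ℕ} (ha : a < e) (hab : a < b)
    (u u' : (ZMod (p ^ e))ˣ) :
    (p : ZMod (p ^ e)) ^ a * (u : ZMod (p ^ e)) ≠ (p : ZMod (p ^ e)) ^ b * (u' : ZMod (p ^ e)) := by
  intro h
  obtain ⟨d, rfl⟩ : ∃ d, b = a + 1 + d := ⟨b - a - 1, by omega⟩
  apply pj_unit_sub_ne hp ha u ((p : ZMod (p ^ e)) ^ d * (u' : ZMod (p ^ e)))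
  rw [mul_sub, h]
  ring

lemma val_unique [NeZero (p ^ e)] (hp : p.Prime) {a b : ℕ} (ha : a < e) (hb : b < e)
    (u u' : (ZMod (p ^ e))ˣ)
    (h : (p : ZMod (p ^ e)) ^ a * (u : ZMod (p ^ e)) = (p : ZMod (p ^ e)) ^ b * (u' : ZMod (p ^ e))) :
    a = b := by
  rcases lt_trichotomy a b with hab | hab | hab
  · exact absurd h (val_lt_ne hp ha hab u u')
  · exact hab
  · exact absurd h.symm (val_lt_ne hp hb hab u' u)

/-- valuation function on `ZMod (p^e)`; equals `e` at `0`. -/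
def val' (p e : ℕ) (y : ZMod (p ^ e)) : ℕ :=
  if y = 0 then e else (y.val).factorization p

lemma val'_zero (p e : ℕ) : val' p e (0 : ZMod (p ^ e)) = e := by simp [val']

lemma val'_spec [NeZero (p ^ e)] (hp : p.Prime) {y : ZMod (p ^ e)} (hy : y ≠ 0) :
    val' p e y < e ∧ ∃ u : (ZMod (p ^ e))ˣ, y = (p : ZMod (p ^ e)) ^ (val' p e y) * u := by
  have hval : y.val ≠ 0 := fun h => hy ((ZMod.val_eq_zero y).mp h)
  set a := y.val with hadef
  set k := a.factorization p with hkdef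
  have hvk : val' p e y = k := by simp [val', hy, hkdef, hadef]
  set m := a / p ^ k with hmdef
  have hdecomp : p ^ k * m = a := Nat.ordProj_mul_ordCompl_eq_self a p
  have hnd : ¬ p ∣ m := Nat.not_dvd_ordCompl hp hval
  have hcop : m.Coprime (p ^ e) :=
    Nat.Coprime.pow_right e (((Nat.Prime.coprime_iff_not_dvd hp).mpr hnd).symm)
  have hunit : IsUnit ((m : ℕ) : ZMod (p ^ e)) :=
    (ZMod.isUnit_iff_coprime _ _).mpr hcop
  have hk_lt : k < e := by
    have h1 : p ^ k ∣ a := Nat.ordProj_dvd a p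
    have h2 : a < p ^ e := ZMod.val_lt y
    have h3 : p ^ k ≤ a := Nat.le_of_dvd (Nat.pos_of_ne_zero hval) h1
    have : p ^ k < p ^ e := lt_of_le_of_lt h3 h2
    exact (pow_lt_pow_iff_right₀ hp.one_lt).mp this
  refine ⟨hvk ▸ hk_lt, hunit.unit, ?_⟩
  rw [hvk, IsUnit.unit_spec]
  have : y = ((a : ℕ) : ZMod (p ^ e)) := (natCast_val_self y).symm
  rw [this, ← hdecomp]
  push_cast
  ring

/-- cardinality of the set of multiples of `p^j` in `ZMod (p^e)`. -/
lemma card_dvd [NeZero (p ^ e)] (hp : p.Prime) {j : ℕ} (hj : j ≤ e) :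
    Nat.card {y : ZMod (p ^ e) // (p : ZMod (p ^ e)) ^ j ∣ y} = p ^ (e - j) := by
  haveI : NeZero (p ^ (e - j)) := ⟨pow_ne_zero _ hp.ne_zero⟩
  have hmain : Function.Bijective
      (fun x : ZMod (p ^ (e - j)) =>
        (⟨((p ^ j * x.val : ℕ) : ZMod (p ^ e)), by
          refine ⟨((x.val : ℕ) : ZMod (p ^ e)), ?_⟩
          push_cast; ring⟩ : {y : ZMod (p ^ e) // (p : ZMod (p ^ e)) ^ j ∣ y})) := by
    constructor
    · intro x y hxy
      have h1 : ((p ^ j * x.val : ℕ) : ZMod (p ^ e)) = ((p ^ j * y.val : ℕ) : ZMod (p ^ e)) :=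
        congrArg Subtype.val hxy
      rw [ZMod.natCast_eq_natCast_iff] at h1
      rw [Nat.modEq_iff_dvd] at h1
      have h2 : (p : ℤ) ^ e ∣ (p : ℤ) ^ j * ((y.val : ℤ) - (x.val : ℤ)) := by
        have := h1
        push_cast at this ⊢
        convert this using 1
        ring
      have hsplit : (p : ℤ) ^ e = (p : ℤ) ^ j * (p : ℤ) ^ (e - j) := by
        rw [← pow_add]; congr 1; omega
      rw [hsplit] at h2
      have h3 : (p : ℤ) ^ (e - j) ∣ ((y.val : ℤ) - (x.val : ℤ)) :=
        (mul_dvd_mul_iff_left (a := (p : ℤ) ^ j)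
          (pow_ne_zero _ (Int.natCast_ne_zero.mpr hp.ne_zero))).mp h2
      have h4 : (x.val : ZMod (p ^ (e - j))) = (y.val : ZMod (p ^ (e - j))) := by
        rw [ZMod.natCast_eq_natCast_iff, Nat.modEq_iff_dvd]
        exact_mod_cast h3
      rwa [natCast_val_self, natCast_val_self] at h4
    · rintro ⟨y, c, hc⟩
      refine ⟨((c.val : ℕ) : ZMod (p ^ (e - j))), ?_⟩
      apply Subtype.ext
      show ((p ^ j * (((c.val : ℕ) : ZMod (p ^ (e - j))).val) : ℕ) : ZMod (p ^ e)) = y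
      have hmod : (((c.val : ℕ) : ZMod (p ^ (e - j))).val) ≡ c.val [MOD p ^ (e - j)] := by
        rw [ZMod.val_natCast]
        exact (Nat.mod_modEq _ _)
      have h5 : p ^ j * (((c.val : ℕ) : ZMod (p ^ (e - j))).val) ≡ p ^ j * c.val
          [MOD p ^ j * p ^ (e - j)] := Nat.ModEq.mul_left' _ hmod
      have hsplit : p ^ j * p ^ (e - j) = p ^ e := by
        rw [← pow_add]; congr 1; omega
      rw [hsplit] at h5
      have h6 := (ZMod.natCast_eq_natCast_iff _ _ _).mpr h5
      rw [h6]
      push_cast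
      rw [natCast_val_self]
      rw [hc]
  calc Nat.card {y : ZMod (p ^ e) // (p : ZMod (p ^ e)) ^ j ∣ y}
      = Nat.card (ZMod (p ^ (e - j))) := (Nat.card_eq_of_bijective _ hmain).symm
    _ = p ^ (e - j) := Nat.card_zmod _

/-- membership of the valuation-`k` stratum. -/
lemma val'_eq_iff [NeZero (p ^ e)] (hp : p.Prime) {k : ℕ} (hk : k < e) (y : ZMod (p ^ e)) :
    val' p e y = k ↔ ((p : ZMod (p ^ e)) ^ k ∣ y ∧ ¬ (p : ZMod (p ^ e)) ^ (k + 1) ∣ y) := by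
  constructor
  · intro h
    have hy : y ≠ 0 := by
      intro h0; rw [h0, val'_zero] at h; omega
    obtain ⟨hlt, u, hu⟩ := val'_spec hp hy
    rw [h] at hu
    constructor
    · exact ⟨u, hu⟩
    · rintro ⟨t, ht⟩
      apply pj_unit_sub_ne hp hk u ((p : ZMod (p ^ e)) ^ 0 * t)
      rw [mul_sub, ← hu, ht]
      ring
  · rintro ⟨⟨t, ht⟩, hnd⟩
    have hy : y ≠ 0 := by
      intro h0
      exact hnd (h0 ▸ dvd_zero _)
    obtain ⟨hlt, u, hu⟩ := val'_spec hp hy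
    set j := val' p e y with hj
    rcases lt_trichotomy j k with hjk | hjk | hjk
    · exfalso
      obtain ⟨d, hd⟩ : ∃ d, k = j + 1 + d := ⟨k - j - 1, by omega⟩
      apply pj_unit_sub_ne hp hlt u ((p : ZMod (p ^ e)) ^ d * t)
      rw [mul_sub, ← hu, ht, hd]
      ring
    · exact hjk
    · exfalso
      apply hnd
      obtain ⟨d, hd⟩ : ∃ d, j = (k + 1) + d := ⟨j - k - 1, by omega⟩
      refine ⟨(p : ZMod (p ^ e)) ^ d * u, ?_⟩
      rw [hu, hd]
      ring

lemma card_val'_fiber [NeZero (p ^ e)] (hp : p.Prime) {k : ℕ} (hk : k < e) :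
    (Finset.univ.filter (fun y : ZMod (p ^ e) => val' p e y = k)).card
      = p ^ (e - k - 1) * (p - 1) := by
  classical
  have hA : ∀ j, j ≤ e → (Finset.univ.filter
      (fun y : ZMod (p ^ e) => (p : ZMod (p ^ e)) ^ j ∣ y)).card = p ^ (e - j) := by
    intro j hj
    have := card_dvd hp hj
    rw [Nat.card_eq_fintype_card, Fintype.card_subtype] at this
    convert this using 2
  have hsub : (Finset.univ.filter
      (fun y : ZMod (p ^ e) => (p : ZMod (p ^ e)) ^ (k + 1) ∣ y)) ⊆
      (Finset.univ.filter (fun y : ZMod (p ^ e) => (p : ZMod (p ^ e)) ^ k ∣ y)) := by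
    intro y hy
    simp only [Finset.mem_filter, Finset.mem_univ, true_and] at hy ⊢
    exact (pow_dvd_pow _ (Nat.le_succ k)).trans hy
  have hset : (Finset.univ.filter (fun y : ZMod (p ^ e) => val' p e y = k))
      = (Finset.univ.filter (fun y : ZMod (p ^ e) => (p : ZMod (p ^ e)) ^ k ∣ y)) \
        (Finset.univ.filter (fun y : ZMod (p ^ e) => (p : ZMod (p ^ e)) ^ (k + 1) ∣ y)) := by
    ext y
    simp only [Finset.mem_filter, Finset.mem_univ, true_and, Finset.mem_sdiff]
    rw [val'_eq_iff hp hk]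
  rw [hset, Finset.card_sdiff_of_subset hsub, hA k hk.le, hA (k + 1) hk]
  have h3 : p ^ (e - k) = p ^ (e - k - 1) * p := by rw [← pow_succ]; congr 1; omega
  have h4 : p ^ (e - (k + 1)) = p ^ (e - k - 1) := rfl
  rw [h3, h4, Nat.mul_sub, mul_one]

/-- the solutions of `p^k * z = p^m * u` all have the form `p^(m-k) * w`. -/
lemma sols_form [NeZero (p ^ e)] (hp : p.Prime) {k m : ℕ} (hk : k ≤ m) (hm : m < e)
    (u : (ZMod (p ^ e))ˣ) {z : ZMod (p ^ e)}
    (h : (p : ZMod (p ^ e)) ^ k * z = (p : ZMod (p ^ e)) ^ m * u) :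
    ∃ w : (ZMod (p ^ e))ˣ, z = (p : ZMod (p ^ e)) ^ (m - k) * w := by
  have hz : z ≠ 0 := by
    intro h0
    rw [h0, mul_zero] at h
    exact pm_unit_ne_zero hp hm u h.symm
  obtain ⟨hlt, w, hw⟩ := val'_spec hp hz
  set j := val' p e z with hj
  have hkj : (p : ZMod (p ^ e)) ^ (k + j) * w = (p : ZMod (p ^ e)) ^ m * u := by
    rw [pow_add, mul_assoc, ← hw, h]
  have hkje : k + j < e := by
    by_contra hge
    push_neg at hge
    have : (p : ZMod (p ^ e)) ^ (k + j) * (w : ZMod (p ^ e)) = 0 := by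
      rw [show k + j = e + (k + j - e) by omega, pow_add, cast_pow_e_eq_zero]
      ring
    rw [hkj] at this
    exact pm_unit_ne_zero hp hm u this
  have : k + j = m := val_unique hp hkje hm w u hkj
  exact ⟨w, by rw [hw, show j = m - k by omega]⟩

/-- number of solutions `z` of `p^k * z = p^m * u` is `p^k`. -/
lemma card_sols [NeZero (p ^ e)] (hp : p.Prime) {k m : ℕ} (hk : k ≤ m) (hm : m < e)
    (u : (ZMod (p ^ e))ˣ) :
    Nat.card {z : ZMod (p ^ e) // (p : ZMod (p ^ e)) ^ k * z = (p : ZMod (p ^ e)) ^ m * u}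
      = p ^ k := by
  have hke : k ≤ e := le_of_lt (lt_of_le_of_lt hk hm)
  have hiff : ∀ x : ZMod (p ^ e), (p : ZMod (p ^ e)) ^ k * x = 0 ↔
      (p : ZMod (p ^ e)) ^ (e - k) ∣ x := pk_mul_eq_zero_iff hp hke
  have E : {z : ZMod (p ^ e) // (p : ZMod (p ^ e)) ^ k * z = (p : ZMod (p ^ e)) ^ m * u}
      ≃ {x : ZMod (p ^ e) // (p : ZMod (p ^ e)) ^ (e - k) ∣ x} :=
    { toFun := fun z => ⟨z.1 - (p : ZMod (p ^ e)) ^ (m - k) * u, by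
        rw [← hiff]
        have : (p : ZMod (p ^ e)) ^ k * ((p : ZMod (p ^ e)) ^ (m - k) * u)
            = (p : ZMod (p ^ e)) ^ m * u := by
          rw [← mul_assoc, ← pow_add, show k + (m - k) = m by omega]
        rw [mul_sub, z.2, this, sub_self]⟩
      invFun := fun x => ⟨x.1 + (p : ZMod (p ^ e)) ^ (m - k) * u, by
        have h0 : (p : ZMod (p ^ e)) ^ k * x.1 = 0 := (hiff x.1).mpr x.2
        have : (p : ZMod (p ^ e)) ^ k * ((p : ZMod (p ^ e)) ^ (m - k) * u)
            = (p : ZMod (p ^ e)) ^ m * u := by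
          rw [← mul_assoc, ← pow_add, show k + (m - k) = m by omega]
        rw [mul_add, h0, this, zero_add]⟩
      left_inv := fun z => by apply Subtype.ext; simp
      right_inv := fun x => by apply Subtype.ext; simp }
  rw [Nat.card_congr E, card_dvd hp (by omega : e - k ≤ e)]
  congr 1
  omega

end CardTuplesAux

namespace CardTuplesAux

lemma val'_le (p e : ℕ) [NeZero (p ^ e)] (hp : p.Prime) (y : ZMod (p ^ e)) :
    val' p e y ≤ e := by
  by_cases hy : y = 0
  · rw [hy, val'_zero]
  · exact (val'_spec hp hy).1.le

/-- auxiliary count value -/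
def Afun (p e m n k : ℕ) : ℕ :=
  p ^ ((e - 1) * (n - 1)) * (p - 1) ^ (n - 1) * (n + (m - k) - 1).choose (n - 1)

def Gfun (p e m n k : ℕ) : ℕ := if k ≤ m then p ^ k * Afun p e m n k else 0

lemma main_count (p e : ℕ) (hp : p.Prime) [NeZero (p ^ e)] :
    ∀ n, 1 ≤ n → ∀ m, m < e → ∀ u : (ZMod (p ^ e))ˣ,
    Nat.card {v : Fin n → ZMod (p ^ e) // ∏ i, v i = (p : ZMod (p ^ e)) ^ m * u}
      = p ^ ((e - 1) * (n - 1)) * (p - 1) ^ (n - 1) * (n + m - 1).choose (n - 1) := by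
  intro n hn
  induction n, hn using Nat.le_induction with
  | base =>
    intro m hm u
    have E : {v : Fin 1 → ZMod (p ^ e) // ∏ i, v i = (p : ZMod (p ^ e)) ^ m * u}
        ≃ {x : ZMod (p ^ e) // x = (p : ZMod (p ^ e)) ^ m * u} :=
      { toFun := fun v => ⟨v.1 0, by rw [← Fin.prod_univ_one v.1]; exact v.2⟩
        invFun := fun x => ⟨fun _ => x.1, by rw [Fin.prod_univ_one]; exact x.2⟩
        left_inv := fun v => by
          apply Subtype.ext; funext i
          have : i = 0 := Subsingleton.elim _ _
          rw [this]
        right_inv := fun x => rfl }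
    rw [Nat.card_congr E, Nat.card_eq_fintype_card, Fintype.card_subtype_eq]
    simp
  | succ n hn ih =>
    intro m hm u
    classical
    set c : ZMod (p ^ e) := (p : ZMod (p ^ e)) ^ m * u with hcdef
    -- Step 1: fiber over the first coordinate
    have key : ∀ y : ZMod (p ^ e),
        Fintype.card {v : Fin (n+1) → ZMod (p ^ e) // (∏ i, v i = c) ∧ v 0 = y}
        = Fintype.card {w : Fin n → ZMod (p ^ e) // y * ∏ i, w i = c} := by
      intro y
      refine Fintype.card_congr
        { toFun := fun v => ⟨Fin.tail v.1, ?_⟩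
          invFun := fun w => ⟨Fin.cons y w.1, ?_, ?_⟩
          left_inv := fun v => ?_
          right_inv := fun w => ?_ }
      · obtain ⟨v, hv, h0⟩ := v
        show y * ∏ i : Fin n, v i.succ = c
        rw [← h0, ← Fin.prod_univ_succ]
        exact hv
      · rw [Fin.prod_univ_succ]
        simpa using w.2
      · simp
      · apply Subtype.ext
        obtain ⟨v, hv, h0⟩ := v
        show Fin.cons y (Fin.tail v) = v
        rw [← h0]
        exact Fin.cons_self_tail v
      · apply Subtype.ext
        simp
    -- Step 2: evaluate each fiber via the valuation of y
    have hfiber : ∀ y : ZMod (p ^ e),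
        Fintype.card {w : Fin n → ZMod (p ^ e) // y * ∏ i, w i = c}
        = Gfun p e m n (val' p e y) := by
      intro y
      by_cases hy : y = 0
      · rw [hy, val'_zero]
        have hG : Gfun p e m n e = 0 := by unfold Gfun; rw [if_neg (by omega)]
        rw [hG, Fintype.card_eq_zero_iff]
        refine ⟨fun w => ?_⟩
        have := w.2
        rw [zero_mul] at this
        exact pm_unit_ne_zero hp hm u this.symm
      · obtain ⟨hlt, u', hu'⟩ := val'_spec hp hy
        set k := val' p e y with hkdef
        by_cases hkm : k ≤ m
        · -- main case
          set u'' : (ZMod (p ^ e))ˣ := u'⁻¹ * u with hu''def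
          have hcond : ∀ w : Fin n → ZMod (p ^ e), (y * ∏ i, w i = c) ↔
              ((p : ZMod (p ^ e)) ^ k * ∏ i, w i
                = (p : ZMod (p ^ e)) ^ m * (u'' : ZMod (p ^ e))) := by
            intro w
            rw [hu', hcdef]
            constructor
            · intro h
              have h2 := congrArg (fun z => ((u'⁻¹ : (ZMod (p ^ e))ˣ) : ZMod (p ^ e)) * z) h
              calc (p : ZMod (p ^ e)) ^ k * ∏ i, w i
                  = ((u'⁻¹ : (ZMod (p ^ e))ˣ) : ZMod (p ^ e))
                      * ((p : ZMod (p ^ e))^k * ↑u' * ∏ i, w i) := by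
                    rw [show ((u'⁻¹ : (ZMod (p ^ e))ˣ) : ZMod (p ^ e))
                        * ((p : ZMod (p ^ e))^k * ↑u' * ∏ i, w i)
                      = ((↑u'⁻¹ * ↑u' : ZMod (p ^ e)))
                        * ((p : ZMod (p ^ e))^k * ∏ i, w i) by ring]
                    rw [Units.inv_mul, one_mul]
                _ = ((u'⁻¹ : (ZMod (p ^ e))ˣ) : ZMod (p ^ e))
                      * ((p : ZMod (p ^ e))^m * ↑u) := by rw [h2]
                _ = (p : ZMod (p ^ e)) ^ m * (u'' : ZMod (p ^ e)) := by
                    rw [hu''def, Units.val_mul]; ring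
            · intro h
              have h2 := congrArg (fun z => ((u' : (ZMod (p ^ e))ˣ) : ZMod (p ^ e)) * z) h
              calc (p : ZMod (p ^ e))^k * ↑u' * ∏ i, w i
                  = ↑u' * ((p : ZMod (p ^ e))^k * ∏ i, w i) := by ring
                _ = ↑u' * ((p : ZMod (p ^ e))^m * (u'' : ZMod (p ^ e))) := by rw [h2]
                _ = (p : ZMod (p ^ e))^m * ↑u := by
                    rw [hu''def, Units.val_mul,
                      show (u' : ZMod (p ^ e)) * ((p : ZMod (p ^ e))^m * (↑u'⁻¹ * ↑u))
                      = (p : ZMod (p ^ e))^m * ((↑u' * ↑u'⁻¹) * ↑u) by ring,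
                      Units.mul_inv, one_mul]
          rw [Fintype.card_congr (Equiv.subtypeEquivRight hcond)]
          -- now fiber over the product value
          have hstep : Fintype.card {w : Fin n → ZMod (p ^ e) //
                (p : ZMod (p ^ e))^k * ∏ i, w i
                  = (p : ZMod (p ^ e))^m * (u'' : ZMod (p ^ e))}
              = ∑ z ∈ Finset.univ.filter (fun z : ZMod (p ^ e) =>
                    (p : ZMod (p ^ e))^k * z = (p : ZMod (p ^ e))^m * (u'' : ZMod (p ^ e))),
                  (Finset.univ.filter
                    (fun w : Fin n → ZMod (p ^ e) => ∏ i, w i = z)).card := by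
            rw [Fintype.card_subtype,
              Finset.card_eq_sum_card_fiberwise
                (f := fun w : Fin n → ZMod (p ^ e) => ∏ i, w i)
                (t := Finset.univ.filter (fun z : ZMod (p ^ e) =>
                  (p : ZMod (p ^ e))^k * z = (p : ZMod (p ^ e))^m * (u'' : ZMod (p ^ e))))
                (fun w hw => by
                  simp only [Finset.mem_coe, Finset.mem_filter, Finset.mem_univ, true_and] at hw ⊢
                  exact hw)]
            refine Finset.sum_congr rfl (fun z hz => ?_)
            simp only [Finset.mem_filter, Finset.mem_univ, true_and] at hz
            congr 1
            ext w
            simp only [Finset.mem_filter, Finset.mem_univ, true_and]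
            constructor
            · rintro ⟨_, h2⟩; exact h2
            · intro h2; exact ⟨by rw [h2]; exact hz, h2⟩
          rw [hstep]
          clear hstep
          have hconst : ∀ z ∈ Finset.univ.filter (fun z : ZMod (p ^ e) =>
                (p : ZMod (p ^ e))^k * z = (p : ZMod (p ^ e))^m * (u'' : ZMod (p ^ e))),
              (Finset.univ.filter (fun w : Fin n → ZMod (p ^ e) => ∏ i, w i = z)).card
                = Afun p e m n k := by
            intro z hz
            simp only [Finset.mem_filter, Finset.mem_univ, true_and] at hz
            obtain ⟨w', hw'⟩ := sols_form hp hkm hm u'' hz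
            rw [← Fintype.card_subtype]
            have hih := ih (m - k) (by omega) w'
            rw [Nat.card_eq_fintype_card] at hih
            unfold Afun
            rw [← hih]
            apply Fintype.card_congr
            exact Equiv.subtypeEquivRight (fun w => by rw [hw'])
          rw [Finset.sum_congr rfl hconst, Finset.sum_const, smul_eq_mul]
          have hcard : (Finset.univ.filter (fun z : ZMod (p ^ e) =>
                (p : ZMod (p ^ e))^k * z
                  = (p : ZMod (p ^ e))^m * (u'' : ZMod (p ^ e)))).card = p ^ k := by
            rw [← Fintype.card_subtype, ← Nat.card_eq_fintype_card]
            exact card_sols hp hkm hm u''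
          rw [hcard]
          unfold Gfun
          rw [if_pos hkm]
        · -- k > m : empty
          unfold Gfun
          rw [if_neg hkm, Fintype.card_eq_zero_iff]
          refine ⟨fun w => ?_⟩
          obtain ⟨w, hw⟩ := w
          obtain ⟨d, hd⟩ : ∃ d, k = m + 1 + d := ⟨k - m - 1, by omega⟩
          apply pj_unit_sub_ne hp hm u
            ((p : ZMod (p ^ e))^d * (↑u' * ∏ i, w i))
          have h2 : y * ∏ i, w i = (p : ZMod (p ^ e))^m
              * ((p : ZMod (p ^ e)) * ((p : ZMod (p ^ e))^d * (↑u' * ∏ i, w i))) := by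
            rw [hu', hd]; ring
          rw [mul_sub, ← h2, hw, hcdef, sub_self]
    -- the sum over first coordinates
    have hsum1 : Fintype.card {v : Fin (n+1) → ZMod (p ^ e) // ∏ i, v i = c}
        = ∑ y : ZMod (p ^ e),
            Fintype.card {w : Fin n → ZMod (p ^ e) // y * ∏ i, w i = c} := by
      rw [Fintype.card_subtype,
        Finset.card_eq_sum_card_fiberwise
          (f := fun v : Fin (n+1) → ZMod (p ^ e) => v 0) (t := Finset.univ)
          (fun v _ => Finset.mem_univ (v 0))]
      refine Finset.sum_congr rfl (fun y _ => ?_)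
      rw [Finset.filter_filter, ← key y, Fintype.card_subtype]
    -- Step 3: sum over valuations
    rw [Nat.card_eq_fintype_card, hsum1,
      Finset.sum_congr rfl (fun y _ => hfiber y)]
    clear hsum1 key
    rw [← Finset.sum_fiberwise_of_maps_to
      (g := fun y : ZMod (p ^ e) => val' p e y) (t := Finset.range (e + 1))
      (fun y _ => Finset.mem_range.mpr (Nat.lt_succ_of_le (val'_le p e hp y)))
      (fun y => Gfun p e m n (val' p e y))]
    have hinner : ∀ k ∈ Finset.range (e + 1),
        ∑ y ∈ Finset.univ.filter (fun y : ZMod (p ^ e) => val' p e y = k),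
            Gfun p e m n (val' p e y)
          = (Finset.univ.filter (fun y : ZMod (p ^ e) => val' p e y = k)).card
              * Gfun p e m n k := by
      intro k _
      rw [Finset.sum_congr rfl (fun y hy => by
        simp only [Finset.mem_filter] at hy
        rw [hy.2]), Finset.sum_const, smul_eq_mul]
    rw [Finset.sum_congr rfl hinner]
    have hrestrict : ∑ k ∈ Finset.range (e + 1),
        (Finset.univ.filter (fun y : ZMod (p ^ e) => val' p e y = k)).card * Gfun p e m n k
        = ∑ k ∈ Finset.range (m + 1),
        (Finset.univ.filter (fun y : ZMod (p ^ e) => val' p e y = k)).card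
          * Gfun p e m n k := by
      symm
      apply Finset.sum_subset
      · apply Finset.range_subset_range.mpr; omega
      · intro k _ hk
        rw [Finset.mem_range, not_lt] at hk
        unfold Gfun
        rw [if_neg (by omega), mul_zero]
    rw [hrestrict]
    clear hrestrict
    have hterm : ∀ k ∈ Finset.range (m + 1),
        (Finset.univ.filter (fun y : ZMod (p ^ e) => val' p e y = k)).card * Gfun p e m n k
        = (p ^ (e - 1) * (p - 1) * (p ^ ((e - 1) * (n - 1)) * (p - 1) ^ (n - 1)))
            * ((m - k) + (n - 1)).choose (n - 1) := by
      intro k hk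
      rw [Finset.mem_range] at hk
      have hkm : k ≤ m := by omega
      have hke : k < e := by omega
      rw [card_val'_fiber hp hke]
      unfold Gfun Afun
      rw [if_pos hkm]
      have hpow : p ^ (e - k - 1) * p ^ k = p ^ (e - 1) := by
        rw [← pow_add]; congr 1; omega
      have hch : n + (m - k) - 1 = (m - k) + (n - 1) := by omega
      rw [hch]
      calc p ^ (e - k - 1) * (p - 1) * (p ^ k *
            (p ^ ((e - 1) * (n - 1)) * (p - 1) ^ (n - 1) * ((m - k) + (n - 1)).choose (n - 1)))
          = (p ^ (e - k - 1) * p ^ k) * (p - 1) * (p ^ ((e - 1) * (n - 1)) * (p - 1) ^ (n - 1))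
            * ((m - k) + (n - 1)).choose (n - 1) := by ring
        _ = (p ^ (e - 1) * (p - 1) * (p ^ ((e - 1) * (n - 1)) * (p - 1) ^ (n - 1)))
            * ((m - k) + (n - 1)).choose (n - 1) := by rw [hpow]
    rw [Finset.sum_congr rfl hterm, ← Finset.mul_sum]
    have hhs : ∑ k ∈ Finset.range (m + 1), ((m - k) + (n - 1)).choose (n - 1)
        = (n + m).choose n := by
      have hrefl := Finset.sum_range_reflect
        (fun j => (j + (n - 1)).choose (n - 1)) (m + 1)
      have hcg : ∀ k ∈ Finset.range (m + 1),
          ((m + 1) - 1 - k + (n - 1)).choose (n - 1)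
            = ((m - k) + (n - 1)).choose (n - 1) := by
        intro k hk; rfl
      rw [← Finset.sum_congr rfl hcg, hrefl, Nat.sum_range_add_choose m (n - 1)]
      congr 1 <;> omega
    rw [hhs]
    clear hhs
    have h1 : p ^ (e - 1) * (p ^ ((e - 1) * (n - 1))) = p ^ ((e - 1) * (n + 1 - 1)) := by
      rw [← pow_add]; congr 1
      obtain ⟨n', rfl⟩ : ∃ n', n = n' + 1 := ⟨n - 1, by omega⟩
      simp [Nat.add_sub_cancel, Nat.mul_succ]
      ring
    have h2 : (p - 1) * (p - 1) ^ (n - 1) = (p - 1) ^ (n + 1 - 1) := by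
      rw [← pow_succ']; congr 1; omega
    have h3 : (n + m).choose n = (n + 1 + m - 1).choose (n + 1 - 1) := by
      congr 1 <;> omega
    calc p ^ (e - 1) * (p - 1) * (p ^ ((e - 1) * (n - 1)) * (p - 1) ^ (n - 1)) * (n + m).choose n
        = (p ^ (e - 1) * p ^ ((e - 1) * (n - 1))) * ((p - 1) * (p - 1) ^ (n - 1))
          * (n + m).choose n := by ring
      _ = p ^ ((e - 1) * (n + 1 - 1)) * (p - 1) ^ (n + 1 - 1)
          * (n + 1 + m - 1).choose (n + 1 - 1) := by rw [h1, h2, h3]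

end CardTuplesAux

/-- For `R = ℤ/p^e ℤ` with `p` prime, `e ≥ 2`, `1 ≤ s < e` and `n ≥ 1`, the number of
`n`-tuples over `R` with product `p^s` equals `p^((e-1)(n-1)) · (p-1)^(n-1) · C(n+s-1, n-1)`. -/
theorem card_tuples_prod_ps_zmod (p e s n : ℕ) (hp : p.Prime) (he : 2 ≤ e)
    (hs1 : 1 ≤ s) (hs2 : s < e) (hn : 1 ≤ n) :
    Nat.card {v : Fin n → ZMod (p ^ e) // ∏ i, v i = (p : ZMod (p ^ e)) ^ s} =
      p ^ ((e - 1) * (n - 1)) * (p - 1) ^ (n - 1) * Nat.choose (n + s - 1) (n - 1) := by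
  haveI : NeZero (p ^ e) := ⟨pow_ne_zero e hp.ne_zero⟩
  have h := CardTuplesAux.main_count p e hp n hn s hs2 1
  simpa using h
end

section
/- Let R be a finite commutative chain ring with residue field F_q, n a positive integer with gcd(n,q)=1, and a, b units with the property that b is a determinant of some n×n circulant matrix. Then for each 0 ≤ s ≤ e (with γ generating the maximal ideal), the number of n×n circulant matrices over R of determinant b·γ^s equals the number of determinant γ^s, and this number is positive. -/
open Matrix

private lemma mulVec_inj_of_isUnit_det {R : Type*} [CommRing R] {n : Type*} [Fintype n]
    [DecidableEq n] {A : Matrix n n R} (h : IsUnit A.det) :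
    Function.Injective A.mulVec := by
  intro v1 v2 hv
  have hA : Invertible A := A.invertibleOfIsUnitDet h
  have := congrArg (fun x => (⅟A).mulVec x) hv
  simpa [Matrix.mulVec_mulVec] using this

private lemma circulant_pow_exists {R : Type*} [CommRing R] {n : ℕ} [NeZero n]
    (w : ZMod n → R) : ∀ m : ℕ, ∃ u : ZMod n → R, Matrix.circulant u = (Matrix.circulant w) ^ m := by
  intro m
  induction m with
  | zero => exact ⟨Pi.single 0 1, by simp [Matrix.circulant_single_one]⟩
  | succ m ih =>
      obtain ⟨u, hu⟩ := ih
      exact ⟨Matrix.circulant u *ᵥ w, by rw [← Matrix.circulant_mul, hu, pow_succ]⟩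

/-- Over a commutative finite chain ring `R` of nilpotency index `e` with residue field of size
`q`, with `gcd(n,q) = 1`: for units `a`, `b` such that `b` is the determinant of some circulant
matrix, and for each `0 ≤ s ≤ e`, the number of `n × n` circulant matrices of determinant
`b·γ^s` equals the number of determinant `γ^s`, and this number is positive. -/
theorem card_circulant_det_unit_mul {R : Type*} [CommRing R] [Finite R] [IsLocalRing R]
    (hchain : ∀ I J : Ideal R, I ≤ J ∨ J ≤ I)
    (γ : R) (hγ : Ideal.span {γ} = IsLocalRing.maximalIdeal R)
    (q e n : ℕ) (hq : Nat.card (R ⧸ IsLocalRing.maximalIdeal R) = q)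
    (he : γ ^ e = 0) (he' : γ ^ (e - 1) ≠ 0)
    [NeZero n] (hgcd : Nat.gcd n q = 1)
    (a b : Rˣ) (hb : ∃ w : ZMod n → R, (Matrix.circulant w).det = (b : R)) :
    ∀ s ≤ e,
      Nat.card {v : ZMod n → R // (Matrix.circulant v).det = (b : R) * γ ^ s} =
        Nat.card {v : ZMod n → R // (Matrix.circulant v).det = γ ^ s} ∧
      0 < Nat.card {v : ZMod n → R // (Matrix.circulant v).det = γ ^ s} := by
  classical
  intro s hs
  obtain ⟨w, hw⟩ := hb
  -- the inverse vector
  have hk : 0 < orderOf b := by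
    have : Finite Rˣ := inferInstance
    exact (orderOf_pos b)
  obtain ⟨u, hu⟩ := circulant_pow_exists w (orderOf b - 1)
  have hudet : (Matrix.circulant u).det * (b : R) = 1 := by
    have h1 : (Matrix.circulant u).det = (b : R) ^ (orderOf b - 1) := by
      rw [hu, Matrix.det_pow, hw]
    rw [h1, ← Units.val_pow_eq_pow_val, ← Units.val_mul, ← pow_succ,
      Nat.sub_add_cancel hk, pow_orderOf_eq_one, Units.val_one]
  constructor
  · -- equality of cardinalities via two injections
    have inj1 : Function.Injective
        (fun v : {v : ZMod n → R // (Matrix.circulant v).det = (b : R) * γ ^ s} =>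
          (⟨Matrix.circulant u *ᵥ v.1, by
            rw [← Matrix.circulant_mul, Matrix.det_mul, v.2, ← mul_assoc, hudet, one_mul]⟩ :
            {v : ZMod n → R // (Matrix.circulant v).det = γ ^ s})) := by
      intro v1 v2 h
      have := mulVec_inj_of_isUnit_det (A := Matrix.circulant u)
        (IsUnit.of_mul_eq_one _ hudet) (congrArg Subtype.val h)
      exact Subtype.ext this
    have inj2 : Function.Injective
        (fun v : {v : ZMod n → R // (Matrix.circulant v).det = γ ^ s} =>
          (⟨Matrix.circulant w *ᵥ v.1, by
            rw [← Matrix.circulant_mul, Matrix.det_mul, v.2, hw]⟩ :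
            {v : ZMod n → R // (Matrix.circulant v).det = (b : R) * γ ^ s})) := by
      intro v1 v2 h
      have := mulVec_inj_of_isUnit_det (A := Matrix.circulant w)
        (by rw [hw]; exact b.isUnit) (congrArg Subtype.val h)
      exact Subtype.ext this
    exact le_antisymm (Nat.card_le_card_of_injective _ inj1)
      (Nat.card_le_card_of_injective _ inj2)
  · -- positivity: explicit circulant with determinant γ^s
    -- n is a unit in R
    have hnu : IsUnit (n : R) := by
      by_contra hn
      set k := R ⧸ IsLocalRing.maximalIdeal R
      letI : Field k := Ideal.Quotient.field _
      letI : Finite k := Finite.of_surjective _ (Ideal.Quotient.mk_surjective (I := IsLocalRing.maximalIdeal R))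
      letI : Fintype k := Fintype.ofFinite k
      have hmem : (n : R) ∈ IsLocalRing.maximalIdeal R := hn
      have hzero : ((n : ℕ) : k) = 0 := by
        have : Ideal.Quotient.mk (IsLocalRing.maximalIdeal R) (n : R) = 0 :=
          (Ideal.Quotient.eq_zero_iff_mem).2 hmem
        simpa using this
      have hdvd1 : ringChar k ∣ n := (CharP.cast_eq_zero_iff k (ringChar k) n).1 hzero
      have hdvd2 : ringChar k ∣ q := by
        have : ((q : ℕ) : k) = 0 := by
          rw [← hq, Nat.card_eq_fintype_card]
          exact Nat.cast_card_eq_zero k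
        exact (CharP.cast_eq_zero_iff k (ringChar k) q).1 this
      have : ringChar k ∣ 1 := hgcd ▸ Nat.dvd_gcd hdvd1 hdvd2
      have h1 : ringChar k = 1 := Nat.dvd_one.1 this
      exact CharP.char_ne_one k (ringChar k) h1
    obtain ⟨un, hun⟩ := hnu
    set c : R := (γ ^ s - 1) * (↑un⁻¹ : R) with hc
    set v : ZMod n → R := fun i => (if i = 0 then 1 else 0) + c with hv
    have hcirc : Matrix.circulant v =
        1 + Matrix.replicateCol Unit (fun _ => c) * Matrix.replicateRow Unit (fun _ => (1 : R)) := by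
      ext i j
      simp [hv, Matrix.circulant_apply, Matrix.one_apply, Matrix.mul_apply, sub_eq_zero]
    have hdet : (Matrix.circulant v).det = γ ^ s := by
      rw [hcirc, Matrix.det_one_add_replicateCol_mul_replicateRow]
      have : (fun _ : ZMod n => (1 : R)) ⬝ᵥ (fun _ => c) = (n : R) * c := by
        simp [dotProduct, Finset.sum_const, ZMod.card, mul_comm]
      rw [this, hc, ← hun, mul_comm ((γ ^ s - 1)) _, ← mul_assoc, ← Units.val_mul,
        mul_inv_cancel, Units.val_one, one_mul]
      ring
    have : Nonempty {v : ZMod n → R // (Matrix.circulant v).det = γ ^ s} := ⟨⟨v, hdet⟩⟩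
    exact Nat.card_pos
end

section
/- Let F_q be a finite field and n a positive integer with gcd(n,q)=1. The number of nonsingular n×n circulant matrices over F_q equals ∏_{d|n} (q^{ord_d(q)} - 1)^{φ(d)/ord_d(q)}, where ord_d(q) is the multiplicative order of q modulo d and φ is Euler's totient. -/
set_option linter.unusedSectionVars false
set_option linter.unusedTactic false
set_option linter.unusedVariables false
set_option maxHeartbeats 1000000

open Polynomial UniqueFactorizationMonoid

noncomputable section

variable {F : Type*} [Field F] [Fintype F] (n : ℕ) [NeZero n]

private def unitsEquivSubtype {M : Type*} [Monoid M] : Mˣ ≃ {x : M // IsUnit x} where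
  toFun u := ⟨u, u.isUnit⟩
  invFun x := x.2.unit
  left_inv u := Units.ext u.isUnit.unit_spec
  right_inv x := Subtype.ext x.2.unit_spec

namespace CirculantAux

lemma monic_f : (X ^ n - 1 : F[X]).Monic := by
  simpa using monic_X_pow_sub_C (1 : F) (NeZero.ne n)

lemma natDegree_f : (X ^ n - 1 : F[X]).natDegree = n := by
  simpa using natDegree_X_pow_sub_C (n := n) (r := (1 : F))

lemma root_pow_n : (AdjoinRoot.root (X ^ n - 1 : F[X])) ^ n = 1 := by
  have h := AdjoinRoot.mk_self (f := (X ^ n - 1 : F[X]))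
  rw [map_sub, map_pow, AdjoinRoot.mk_X, map_one, sub_eq_zero] at h
  exact h

lemma root_pow (k : ℕ) :
    (AdjoinRoot.root (X ^ n - 1 : F[X])) ^ k
      = (AdjoinRoot.root (X ^ n - 1 : F[X])) ^ ((k : ZMod n)).val := by
  conv_lhs => rw [← Nat.div_add_mod k n]
  rw [pow_add, pow_mul, root_pow_n, one_pow, one_mul, ZMod.val_natCast]

/-- The `F`-basis of `AdjoinRoot (X^n-1)` given by powers of the root, indexed by `ZMod n`. -/
def rootBasis : Module.Basis (ZMod n) F (AdjoinRoot (X ^ n - 1 : F[X])) :=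
  ((AdjoinRoot.powerBasis (monic_f n (F := F)).ne_zero).basis.reindex
    ((finCongr (natDegree_f n)).trans
      ⟨fun i => (i : ZMod n), fun a => ⟨a.val, a.val_lt⟩,
        fun i => by simp [ZMod.val_natCast_of_lt i.isLt],
        fun a => by simp [ZMod.natCast_rightInverse a]⟩))

lemma rootBasis_apply (a : ZMod n) :
    rootBasis n (F := F) a = (AdjoinRoot.root (X ^ n - 1 : F[X])) ^ a.val := by
  rw [rootBasis]
  erw [Module.Basis.reindex_apply, PowerBasis.basis_eq_pow]
  rfl

/-- The linear equivalence sending a vector to the corresponding element of `F[X]/(X^n-1)`. -/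
def toQuot : (ZMod n → F) ≃ₗ[F] AdjoinRoot (X ^ n - 1 : F[X]) :=
  (rootBasis n).equivFun.symm

lemma toQuot_apply (v : ZMod n → F) :
    toQuot n v = ∑ i : ZMod n, v i • (AdjoinRoot.root (X ^ n - 1 : F[X])) ^ i.val := by
  rw [toQuot, Module.Basis.equivFun_symm_apply]
  exact Finset.sum_congr rfl fun i _ => by rw [rootBasis_apply]

lemma toQuot_single_one : toQuot n (Pi.single (0 : ZMod n) (1 : F)) = 1 := by
  rw [toQuot_apply, Fintype.sum_eq_single (0 : ZMod n)]
  · simp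
  · intro i hi
    simp [Pi.single_eq_of_ne hi]

lemma toQuot_mul (v w : ZMod n → F) :
    toQuot n v * toQuot n w = toQuot n ((Matrix.circulant v).mulVec w) := by
  set ρ := AdjoinRoot.root (X ^ n - 1 : F[X]) with hρ
  have hkey : ∀ i j : ZMod n, ρ ^ (i.val + j.val) = ρ ^ (i + j).val := by
    intro i j
    rw [root_pow n (i.val + j.val)]
    congr 2
    rw [Nat.cast_add, ZMod.natCast_rightInverse i, ZMod.natCast_rightInverse j]
  rw [toQuot_apply, toQuot_apply, toQuot_apply, Finset.sum_mul_sum]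
  have hmv : ∀ k : ZMod n, (Matrix.circulant v).mulVec w k = ∑ j : ZMod n, v (k - j) * w j := by
    intro k
    simp [Matrix.mulVec, dotProduct, Matrix.circulant_apply]
  calc
    ∑ i : ZMod n, ∑ j : ZMod n, (v i • ρ ^ i.val) * (w j • ρ ^ j.val)
        = ∑ j : ZMod n, ∑ i : ZMod n, (v i * w j) • ρ ^ (i + j).val := by
          rw [Finset.sum_comm]
          refine Finset.sum_congr rfl fun j _ => Finset.sum_congr rfl fun i _ => ?_
          rw [smul_mul_smul_comm, ← pow_add, hkey]
    _ = ∑ j : ZMod n, ∑ k : ZMod n, (v (k - j) * w j) • ρ ^ k.val := by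
          refine Finset.sum_congr rfl fun j _ => ?_
          refine Fintype.sum_equiv (Equiv.addRight j) _ _ fun i => ?_
          simp only [Equiv.coe_addRight, add_sub_cancel_right]
    _ = ∑ k : ZMod n, ((Matrix.circulant v).mulVec w k) • ρ ^ k.val := by
          rw [Finset.sum_comm]
          refine Finset.sum_congr rfl fun k _ => ?_
          rw [hmv, Finset.sum_smul]

lemma isUnit_det_iff (v : ZMod n → F) :
    IsUnit (Matrix.circulant v).det ↔ IsUnit (toQuot n v) := by
  have hiff : (∃ w, Matrix.circulant v * Matrix.circulant w = 1) ↔ IsUnit (toQuot n v) := by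
    constructor
    · rintro ⟨w, hw⟩
      refine IsUnit.of_mul_eq_one (toQuot n w) ?_
      rw [toQuot_mul]
      rw [Matrix.circulant_mul, ← Matrix.circulant_single_one (n := ZMod n) (α := F)] at hw
      rw [Matrix.circulant_injective hw, toQuot_single_one]
    · intro h
      obtain ⟨r, hr⟩ := h.exists_right_inv
      obtain ⟨w, rfl⟩ := (toQuot n (F := F)).surjective r
      rw [toQuot_mul, ← toQuot_single_one n] at hr
      have := (toQuot n (F := F)).injective hr
      refine ⟨w, ?_⟩
      rw [Matrix.circulant_mul, this, Matrix.circulant_single_one]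
  constructor
  · intro h
    have hM : IsUnit (Matrix.circulant v) := (Matrix.isUnit_iff_isUnit_det _).mpr h
    set u := hM.unit with hu
    have hk : 0 < orderOf u := orderOf_pos u
    have hpow : Matrix.circulant v ^ orderOf u = 1 := by
      have := congrArg Units.val (pow_orderOf_eq_one u)
      rw [Units.val_pow_eq_pow_val, Units.val_one] at this
      simpa only [hu, IsUnit.unit_spec] using this
    have hcirc : ∀ j : ℕ, ∃ w, Matrix.circulant v ^ j = Matrix.circulant w := by
      intro j
      induction j with
      | zero => exact ⟨Pi.single 0 1, by rw [pow_zero, Matrix.circulant_single_one]⟩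
      | succ j ih =>
        obtain ⟨w, hw⟩ := ih
        exact ⟨_, by rw [pow_succ', hw, Matrix.circulant_mul]⟩
    obtain ⟨k, hk'⟩ : ∃ k, orderOf u = k + 1 := ⟨orderOf u - 1, by omega⟩
    obtain ⟨w, hw⟩ := hcirc k
    refine hiff.mp ⟨w, ?_⟩
    rw [← hw, ← pow_succ', ← hk', hpow]
  · intro h
    obtain ⟨w, hw⟩ := hiff.mpr h
    have := congrArg Matrix.det hw
    rw [Matrix.det_mul, Matrix.det_one] at this
    exact IsUnit.of_mul_eq_one _ this

end CirculantAux

theorem card_circulant_eq_card_units :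
    Nat.card {v : ZMod n → F // IsUnit (Matrix.circulant v).det}
      = Nat.card (AdjoinRoot (X ^ n - 1 : F[X]))ˣ := by
  rw [Nat.card_congr (unitsEquivSubtype (M := AdjoinRoot (X ^ n - 1 : F[X])))]
  exact Nat.card_congr
    ((Equiv.subtypeEquiv (CirculantAux.toQuot n (F := F)).toEquiv
      (fun v => CirculantAux.isUnit_det_iff n v)))

end

noncomputable section

/-- Every monic irreducible factor of the `d`-th cyclotomic polynomial over a finite field
with `q` elements (with `q` coprime to `d`) has degree the order of `q` mod `d`. -/
lemma natDegree_factor_cyclotomic {F : Type*} [Field F] [Fintype F] [DecidableEq F] (q d : ℕ)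
    (hq : Fintype.card F = q) (hd0 : 0 < d) (hco : Nat.Coprime q d) {g : F[X]}
    (hg : g ∈ normalizedFactors (cyclotomic d F)) :
    g.natDegree = orderOf (q : ZMod d) := by
  classical
  haveI : NeZero d := ⟨hd0.ne'⟩
  set md := orderOf (q : ZMod d) with hmd
  -- positivity of md
  have hmd_pos : 0 < md := by
    have hcoe : ((ZMod.unitOfCoprime q hco : (ZMod d)ˣ) : ZMod d) = (q : ZMod d) :=
      ZMod.coe_unitOfCoprime q hco
    rw [hmd, ← hcoe, orderOf_units]
    exact orderOf_pos _
  have hq2 : 1 < q := hq ▸ Fintype.one_lt_card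
  have hq0 : 0 < q := by omega
  -- the factor is irreducible
  have hirr : Irreducible g := irreducible_of_normalized_factor _ hg
  haveI : Fact (Irreducible g) := ⟨hirr⟩
  have hm_pos : 0 < g.natDegree := hirr.natDegree_pos
  set m := g.natDegree with hm
  -- the quotient field K
  set K := AdjoinRoot g with hK
  haveI : Fintype K :=
    Fintype.ofEquiv _ (AdjoinRoot.powerBasis hirr.ne_zero).basis.equivFun.toEquiv.symm
  have hfinrank : Module.finrank F K = m := by
    rw [(AdjoinRoot.powerBasis hirr.ne_zero).finrank, AdjoinRoot.powerBasis_dim]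
  have hcardK : Fintype.card K = q ^ m := by
    rw [Module.card_eq_pow_finrank (K := F) (V := K), hq, hfinrank]
  -- characteristic
  set p := ringChar F with hp
  haveI : CharP F p := ringChar.charP F
  have hp_prime : p.Prime := CharP.char_is_prime F p
  haveI : Fact p.Prime := ⟨hp_prime⟩
  obtain ⟨s, -, hqs⟩ := FiniteField.card F p
  have hpq : p ∣ q := by
    rw [← hq, hqs]
    exact dvd_pow_self p (by positivity)
  haveI : CharP K p := charP_of_injective_ringHom (algebraMap F K).injective p
  have hpd : ¬ p ∣ d := fun hpd =>
    hp_prime.one_lt.ne' (Nat.dvd_one.mp (hco ▸ Nat.dvd_gcd hpq hpd))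
  haveI : NeZero (d : K) := ⟨fun h => hpd ((CharP.cast_eq_zero_iff K p d).mp h)⟩
  -- the root is a primitive d-th root of unity
  set ζ := AdjoinRoot.root g with hζ
  have hz : (cyclotomic d K).IsRoot ζ := by
    have h1 : (aeval ζ) (cyclotomic d F) = 0 := by
      rw [AdjoinRoot.aeval_eq, AdjoinRoot.mk_eq_zero]
      exact dvd_of_mem_normalizedFactors hg
    rw [← map_cyclotomic d (algebraMap F K)]
    rwa [IsRoot.def, eval_map, ← aeval_def]
  have hprim : IsPrimitiveRoot ζ d := isRoot_cyclotomic_iff.mp hz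
  have horder : orderOf ζ = d := hprim.eq_orderOf.symm
  have hζ0 : ζ ≠ 0 := by
    intro h0
    have := hprim.pow_eq_one
    rw [h0, zero_pow hd0.ne'] at this
    exact zero_ne_one this
  -- generic: ζ ^ (q^t) = ζ → ζ ^ (q^t - 1) = 1
  have cancel : ∀ t : ℕ, ζ ^ q ^ t = ζ → ζ ^ (q ^ t - 1) = 1 := by
    intro t ht
    have h1 : 1 ≤ q ^ t := Nat.one_le_pow _ _ hq0
    have h2 : ζ ^ (q ^ t - 1) * ζ = 1 * ζ := by
      rw [← pow_succ, Nat.sub_add_cancel h1, ht, one_mul]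
    exact mul_right_cancel₀ hζ0 h2
  -- translation between `d ∣ q^t - 1` and `(q : ZMod d)^t = 1`
  have transl : ∀ t : ℕ, d ∣ q ^ t - 1 ↔ (q : ZMod d) ^ t = 1 := by
    intro t
    have h1 : 1 ≤ q ^ t := Nat.one_le_pow _ _ hq0
    rw [← Nat.modEq_iff_dvd' h1]
    rw [show ((q : ZMod d) ^ t = 1) ↔ (((q ^ t : ℕ) : ZMod d) = ((1 : ℕ) : ZMod d)) by
      push_cast; rfl]
    rw [ZMod.natCast_eq_natCast_iff]
    exact ⟨fun h => h.symm, fun h => h.symm⟩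
  -- direction A : md ∣ m
  have hA : md ∣ m := by
    apply orderOf_dvd_of_pow_eq_one
    rw [← transl m, ← horder]
    apply orderOf_dvd_of_pow_eq_one
    apply cancel
    rw [← hcardK]
    exact FiniteField.pow_card ζ
  -- direction B : m ≤ md
  have hB : m ≤ md := by
    -- every element of K is fixed by x ↦ x ^ (q ^ md)
    have hζfix : ζ ^ q ^ md = ζ := by
      have h1 : 1 ≤ q ^ md := Nat.one_le_pow _ _ hq0
      have hdvd : d ∣ q ^ md - 1 := (transl md).mpr (pow_orderOf_eq_one _)
      have : ζ ^ (q ^ md - 1) = 1 := by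
        rw [← horder] at hdvd
        exact orderOf_dvd_iff_pow_eq_one.mp hdvd
      calc ζ ^ q ^ md = ζ ^ (q ^ md - 1) * ζ := by
            rw [← pow_succ, Nat.sub_add_cancel h1]
        _ = ζ := by rw [this, one_mul]
    have hfix : ∀ x : K, x ^ q ^ md = x := by
      set ψ : K →+* K := (frobenius K p) ^ (s * md) with hψ
      have hψapp : ∀ x : K, ψ x = x ^ q ^ md := by
        intro x
        rw [hψ, RingHom.coe_pow, iterate_frobenius, ← hq, hqs]
        norm_cast
        rw [← pow_mul]
      have hψC : ψ.comp (algebraMap F K) = algebraMap F K := by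
        ext c
        rw [RingHom.comp_apply, hψapp, ← map_pow, ← hq, FiniteField.pow_card_pow]
      intro x
      obtain ⟨P, rfl⟩ := AdjoinRoot.mk_surjective (g := g) x
      calc (AdjoinRoot.mk g P : K) ^ q ^ md = ψ (AdjoinRoot.mk g P) := (hψapp _).symm
        _ = eval₂ (ψ.comp (algebraMap F K)) (ψ ζ) P := by
              rw [← AdjoinRoot.aeval_eq, aeval_def, hom_eval₂]
        _ = eval₂ (algebraMap F K) ζ P := by rw [hψC, hψapp, hζfix]
        _ = AdjoinRoot.mk g P := by rw [← aeval_def, AdjoinRoot.aeval_eq]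
    -- use a generator of Kˣ
    obtain ⟨x, hx⟩ := IsCyclic.exists_generator (α := Kˣ)
    have hxord : orderOf x = q ^ m - 1 := by
      rw [orderOf_eq_card_of_forall_mem_zpowers hx, Nat.card_units,
        Nat.card_eq_fintype_card, hcardK]
    have hx1 : x ^ (q ^ md - 1) = 1 := by
      have hv : (x : K) ^ (q ^ md - 1) = 1 := by
        have h1 : 1 ≤ q ^ md := Nat.one_le_pow _ _ hq0
        have h2 : (x : K) ^ (q ^ md - 1) * x = 1 * x := by
          rw [← pow_succ, Nat.sub_add_cancel h1, hfix, one_mul]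
        exact mul_right_cancel₀ x.ne_zero h2
      ext
      push_cast
      exact hv
    have hdvd2 : q ^ m - 1 ∣ q ^ md - 1 := hxord ▸ orderOf_dvd_of_pow_eq_one hx1
    have hpos : 0 < q ^ md - 1 := by
      have : 1 < q ^ md := Nat.one_lt_pow hmd_pos.ne' hq2
      omega
    have hle := Nat.le_of_dvd hpos hdvd2
    have h1m : 1 ≤ q ^ m := Nat.one_le_pow _ _ hq0
    have : q ^ m ≤ q ^ md := by omega
    exact (Nat.pow_le_pow_iff_right hq2).mp this
  exact le_antisymm hB (Nat.le_of_dvd hm_pos hA)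

end

noncomputable section

variable {F : Type*} [Field F] [Fintype F] [DecidableEq F]


private def unitsPiEquiv {ι : Type*} (R : ι → Type*) [∀ i, Monoid (R i)] :
    (∀ i, R i)ˣ ≃ ∀ i, (R i)ˣ where
  toFun u i := ⟨u.val i, u.inv i, congrFun u.val_inv i, congrFun u.inv_val i⟩
  invFun f := ⟨fun i => f i, fun i => ((f i)⁻¹ : (R i)ˣ),
    funext fun i => (f i).val_inv, funext fun i => (f i).inv_val⟩
  left_inv u := Units.ext rfl
  right_inv f := funext fun i => Units.ext rfl

lemma monic_of_mem_normalizedFactors {f g : F[X]} (hg : g ∈ normalizedFactors f) : g.Monic := by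
  have h := normalize_normalized_factor _ hg
  rw [← h]
  exact monic_normalize (irreducible_of_normalized_factor _ hg).ne_zero

lemma prod_normalizedFactors_of_monic {f : F[X]} (hf : f.Monic) :
    (normalizedFactors f).prod = f := by
  refine eq_of_monic_of_associated ?_ hf (prod_normalizedFactors hf.ne_zero)
  have := monic_multiset_prod_of_monic (normalizedFactors f) id
    (fun g hg => monic_of_mem_normalizedFactors hg)
  simpa using this

lemma card_units_quot_span (q : ℕ) (hq : Fintype.card F = q) {g : F[X]} (hirr : Irreducible g) :
    Nat.card (F[X] ⧸ Ideal.span {g})ˣ = q ^ g.natDegree - 1 := by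
  haveI : Fact (Irreducible g) := ⟨hirr⟩
  show Nat.card (AdjoinRoot g)ˣ = q ^ g.natDegree - 1
  haveI : Fintype (AdjoinRoot g) :=
    Fintype.ofEquiv _ (AdjoinRoot.powerBasis hirr.ne_zero).basis.equivFun.toEquiv.symm
  rw [Nat.card_units, Nat.card_eq_fintype_card, Module.card_eq_pow_finrank (K := F), hq,
    (AdjoinRoot.powerBasis hirr.ne_zero).finrank, AdjoinRoot.powerBasis_dim]

/-- CRT-based count of units in `F[X]/(f)` for a monic squarefree `f`. -/
lemma card_units_adjoinRoot (q : ℕ) (hq : Fintype.card F = q) {f : F[X]} (hf : f.Monic)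
    (hsq : Squarefree f) :
    Nat.card (AdjoinRoot f)ˣ
      = ((normalizedFactors f).map (fun g => q ^ g.natDegree - 1)).prod := by
  have hnodup : (normalizedFactors f).Nodup :=
    (squarefree_iff_nodup_normalizedFactors hf.ne_zero).mp hsq
  set T : Finset F[X] := ⟨normalizedFactors f, hnodup⟩ with hT
  have hmemT : ∀ g ∈ T, g ∈ normalizedFactors f := fun g hg => hg
  have hpair : Pairwise (Function.onFun IsCoprime fun g : {x // x ∈ T} => Ideal.span {g.1}) := by
    intro x y hxy
    rw [Function.onFun, Ideal.isCoprime_span_singleton_iff]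
    have hx := irreducible_of_normalized_factor _ (hmemT _ x.2)
    have hy := irreducible_of_normalized_factor _ (hmemT _ y.2)
    rw [hx.coprime_iff_not_dvd]
    intro hdvd
    have hass : Associated x.1 y.1 := hx.associated_of_dvd hy hdvd
    have : x.1 = y.1 := eq_of_monic_of_associated
      (monic_of_mem_normalizedFactors (hmemT _ x.2))
      (monic_of_mem_normalizedFactors (hmemT _ y.2)) hass
    exact hxy (Subtype.ext this)
  have hspan : Ideal.span {f} = ⨅ g : {x // x ∈ T}, Ideal.span {g.1} := by
    rw [Ideal.iInf_span_singleton (fun i j hij => ?_)]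
    · congr 1
      rw [Finset.prod_coe_sort T (fun g => g)]
      have : ∏ g ∈ T, g = (normalizedFactors f).prod := by
        rw [Finset.prod_eq_multiset_prod]
        simp [hT]
      rw [this, prod_normalizedFactors_of_monic hf]
    · have := hpair hij
      rwa [Function.onFun, Ideal.isCoprime_span_singleton_iff] at this
  have e : AdjoinRoot f ≃+* ∀ g : {x // x ∈ T}, F[X] ⧸ Ideal.span {g.1} :=
    (Ideal.quotEquivOfEq hspan).trans
      (Ideal.quotientInfRingEquivPiQuotient _ hpair)
  rw [Nat.card_congr ((Units.mapEquiv e.toMulEquiv).toEquiv)]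
  rw [Nat.card_congr (unitsPiEquiv _)]
  rw [Nat.card_pi]
  have : ∀ g : {x // x ∈ T}, Nat.card (F[X] ⧸ Ideal.span {g.1})ˣ = q ^ g.1.natDegree - 1 :=
    fun g => card_units_quot_span q hq (irreducible_of_normalized_factor _ (hmemT _ g.2))
  calc ∏ g : {x // x ∈ T}, Nat.card (F[X] ⧸ Ideal.span {g.1})ˣ
      = ∏ g : {x // x ∈ T}, (q ^ g.1.natDegree - 1) :=
        Finset.prod_congr rfl (fun g _ => this g)
    _ = ∏ g ∈ T, (q ^ g.natDegree - 1) := Finset.prod_coe_sort T (fun g => q ^ g.natDegree - 1)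
    _ = ((normalizedFactors f).map (fun g => q ^ g.natDegree - 1)).prod := by
        rw [Finset.prod_eq_multiset_prod]

lemma orderOf_pos_zmod (q d : ℕ) (hd0 : 0 < d) (hco : q.Coprime d) :
    0 < orderOf (q : ZMod d) := by
  haveI : NeZero d := ⟨hd0.ne'⟩
  rw [← ZMod.coe_unitOfCoprime q hco, orderOf_units]
  exact orderOf_pos _

lemma factorCount_finset_prod {ι : Type*} (c : F[X] → ℕ) (s : Finset ι) (f : ι → F[X])
    (hf : ∀ i ∈ s, f i ≠ 0) :
    ((normalizedFactors (∏ i ∈ s, f i)).map c).prod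
      = ∏ i ∈ s, ((normalizedFactors (f i)).map c).prod := by
  classical
  induction s using Finset.cons_induction with
  | empty => simp
  | cons a s ha ih =>
    rw [Finset.prod_cons, Finset.prod_cons,
      normalizedFactors_mul (hf a (Finset.mem_cons_self a s))
        (Finset.prod_ne_zero_iff.mpr (fun i hi => hf i (Finset.mem_cons_of_mem hi))),
      Multiset.map_add, Multiset.prod_add, ih (fun i hi => hf i (Finset.mem_cons_of_mem hi))]

lemma cyclotomic_factor_prod (q d : ℕ) (hq : Fintype.card F = q) (hd0 : 0 < d)
    (hco : Nat.Coprime q d) :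
    ((normalizedFactors (cyclotomic d F)).map (fun g => q ^ g.natDegree - 1)).prod
      = (q ^ orderOf (q : ZMod d) - 1) ^ (d.totient / orderOf (q : ZMod d)) := by
  set md := orderOf (q : ZMod d) with hmd
  set S := normalizedFactors (cyclotomic d F) with hS
  have hdeg : ∀ g ∈ S, g.natDegree = md := fun g hg =>
    natDegree_factor_cyclotomic q d hq hd0 hco hg
  have hmd_pos : 0 < md := orderOf_pos_zmod q d hd0 hco
  have hdegmap : S.map natDegree = Multiset.replicate (Multiset.card S) md :=
    Multiset.eq_replicate.mpr ⟨Multiset.card_map _ _,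
      fun b hb => by obtain ⟨g, hg, rfl⟩ := Multiset.mem_map.mp hb; exact hdeg g hg⟩
  have hcard : Multiset.card S * md = d.totient := by
    have h1 : (S.map natDegree).sum = d.totient := by
      rw [← natDegree_multiset_prod_of_monic S (fun g hg => monic_of_mem_normalizedFactors hg),
        prod_normalizedFactors_of_monic (cyclotomic.monic d F), natDegree_cyclotomic]
    rw [hdegmap, Multiset.sum_replicate, smul_eq_mul] at h1
    exact h1
  have hmap : S.map (fun g => q ^ g.natDegree - 1)
      = Multiset.replicate (Multiset.card S) (q ^ md - 1) :=
    Multiset.eq_replicate.mpr ⟨Multiset.card_map _ _,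
      fun b hb => by obtain ⟨g, hg, rfl⟩ := Multiset.mem_map.mp hb; rw [hdeg g hg]⟩
  rw [hmap, Multiset.prod_replicate]
  congr 1
  rw [← hcard, Nat.mul_div_cancel _ hmd_pos]

lemma squarefree_X_pow_sub_one' {n : ℕ} (hn : (n : F) ≠ 0) :
    Squarefree (X ^ n - 1 : F[X]) := by
  have h := separable_X_pow_sub_C (1 : F) hn one_ne_zero
  rw [map_one] at h
  exact h.squarefree
end

/-- Over a finite field with `q` elements and `gcd(n,q) = 1`, the number of nonsingular `n × n`
circulant matrices equals `∏_{d ∣ n} (q^(ord_d q) - 1)^(φ(d)/ord_d q)`. -/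
theorem card_nonsingular_circulant_field {F : Type*} [Field F] [Fintype F] (q n : ℕ)
    (hq : Fintype.card F = q) [NeZero n] (hgcd : Nat.gcd n q = 1) :
    Nat.card {v : ZMod n → F // IsUnit (Matrix.circulant v).det} =
      ∏ d ∈ n.divisors,
        (q ^ orderOf (q : ZMod d) - 1) ^ (Nat.totient d / orderOf (q : ZMod d)) := by
  classical
  have hn0 : 0 < n := Nat.pos_of_ne_zero (NeZero.ne n)
  have hco : ∀ d ∈ n.divisors, Nat.Coprime q d := fun d hd =>
    (Nat.Coprime.coprime_dvd_left (Nat.dvd_of_mem_divisors hd) hgcd).symm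
  have hnF : (n : F) ≠ 0 := by
    intro h
    set p := ringChar F with hp
    haveI : CharP F p := ringChar.charP F
    have hp_prime : p.Prime := CharP.char_is_prime F p
    haveI : Fact p.Prime := ⟨hp_prime⟩
    obtain ⟨s, -, hqs⟩ := FiniteField.card F p
    have hpq : p ∣ q := by
      rw [← hq, hqs]; exact dvd_pow_self p (by positivity)
    have hpn : p ∣ n := (CharP.cast_eq_zero_iff F p n).mp h
    exact hp_prime.one_lt.ne' (Nat.dvd_one.mp (hgcd ▸ Nat.dvd_gcd hpn hpq))
  rw [card_circulant_eq_card_units n]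
  rw [card_units_adjoinRoot q hq (CirculantAux.monic_f n) (squarefree_X_pow_sub_one' hnF)]
  rw [← prod_cyclotomic_eq_X_pow_sub_one hn0 F]
  rw [factorCount_finset_prod _ _ _ (fun d _ => cyclotomic_ne_zero d F)]
  exact Finset.prod_congr rfl fun d hd =>
    cyclotomic_factor_prod q d hq (Nat.pos_of_mem_divisors hd) (hco d hd)
end

section
/- Let R be a commutative ring containing a primitive n-th root of unity ω such that n is invertible in R. Then every n×n circulant matrix cir(a_1,...,a_n) over R has determinant ∏_{j=0}^{n-1} (Σ_{i=1}^{n} a_i ω^{(i-1)j}). -/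
open Matrix Finset

private lemma isUnit_finset_prod {α : Type*} {M : Type*} [CommMonoid M] (s : Finset α)
    (f : α → M) (h : ∀ a ∈ s, IsUnit (f a)) : IsUnit (∏ a ∈ s, f a) := by
  classical
  induction s using Finset.induction_on with
  | empty => simp
  | insert _ _ hx ih =>
    rw [Finset.prod_insert hx]
    exact (h _ (Finset.mem_insert_self _ _)).mul
      (ih fun a ha => h a (Finset.mem_insert_of_mem ha))

private def zmodFinEquiv (n : ℕ) [NeZero n] : ZMod n ≃ Fin n where
  toFun i := ⟨i.val, ZMod.val_lt i⟩
  invFun k := ((k : ℕ) : ZMod n)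
  left_inv i := by simp [ZMod.natCast_val]
  right_inv k := by
    ext
    simp [ZMod.val_cast_of_lt k.isLt]

@[simp] private lemma zmodFinEquiv_apply_coe (n : ℕ) [NeZero n] (i : ZMod n) :
    ((zmodFinEquiv n i : Fin n) : ℕ) = i.val := rfl

/-- If a commutative ring `R` contains a primitive `n`-th root of unity `ω` (with `ω^k - 1` a
unit for `0 < k < n`) and `n` is invertible in `R`, then every `n × n` circulant matrix has
determinant `∏_j Σ_i v i · ω^(i·j)`. -/
theorem det_circulant_eq_prod_eigenvalues {R : Type*} [CommRing R] (n : ℕ) [NeZero n]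
    (ω : R) (hωn : ω ^ n = 1) (hωk : ∀ k : ℕ, 0 < k → k < n → IsUnit (ω ^ k - 1))
    (hn : IsUnit (n : R)) (v : ZMod n → R) :
    (Matrix.circulant v).det =
      ∏ j : ZMod n, ∑ i : ZMod n, v i * ω ^ (i.val * j.val) := by
  have hnpos : 0 < n := Nat.pos_of_ne_zero (NeZero.ne n)
  have hωu : IsUnit ω := by
    apply IsUnit.of_mul_eq_one (a := ω) (ω ^ (n - 1))
    rw [← pow_succ']
    rwa [Nat.sub_add_cancel hnpos]
  have key : ∀ c : ℕ, ω ^ c = ω ^ (c % n) := by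
    intro c
    conv_lhs => rw [← Nat.mod_add_div c n]
    rw [pow_add, pow_mul, hωn, one_pow, mul_one]
  have hmod : ∀ a b : ℕ, a % n = b % n → ω ^ a = ω ^ b := by
    intro a b h
    rw [key a, key b, h]
  set V : Matrix (ZMod n) (ZMod n) R := Matrix.of fun i j => ω ^ (i.val * j.val) with hVdef
  set d : ZMod n → R := fun j => ∑ i : ZMod n, v i * ω ^ (i.val * j.val) with hddef
  have hCV : V * Matrix.circulant v = Matrix.diagonal d * V := by
    ext i j
    rw [Matrix.mul_apply, Matrix.diagonal_mul]
    have hre : ∑ k : ZMod n, V i k * Matrix.circulant v k j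
        = ∑ m : ZMod n, V i (j + m) * Matrix.circulant v (j + m) j :=
      (Equiv.sum_comp (Equiv.addLeft j) fun k => V i k * Matrix.circulant v k j).symm
    rw [hre, hddef, Finset.sum_mul]
    apply Finset.sum_congr rfl
    intro m _
    simp only [Matrix.circulant_apply, hVdef, Matrix.of_apply, add_sub_cancel_right,
      add_sub_cancel_left]
    have hpow : ω ^ (i.val * (j + m).val) = ω ^ (i.val * j.val) * ω ^ (i.val * m.val) := by
      rw [← pow_add]
      apply hmod
      have h1 : (j + m).val % n = (j.val + m.val) % n := by
        rw [ZMod.val_add]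
        exact (Nat.mod_mod_of_dvd _ dvd_rfl)
      calc (i.val * (j + m).val) % n = (i.val * (j.val + m.val)) % n :=
            Nat.ModEq.mul_left i.val (by simpa [Nat.ModEq] using h1)
        _ = (i.val * j.val + i.val * m.val) % n := by ring_nf
    rw [hpow]
    ring_nf
  have hVsub : V = (Matrix.vandermonde fun k : Fin n => ω ^ (k : ℕ)).submatrix
      (zmodFinEquiv n) (zmodFinEquiv n) := by
    ext i j
    simp [hVdef, Matrix.vandermonde, pow_mul]
  have hVu : IsUnit V.det := by
    rw [hVsub, Matrix.det_submatrix_equiv_self, Matrix.det_vandermonde]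
    apply isUnit_finset_prod
    intro i _
    apply isUnit_finset_prod
    intro j hj
    have hij' : i < j := Finset.mem_Ioi.mp hj
    have hij : (i : ℕ) < (j : ℕ) := hij'
    have : ω ^ (j : ℕ) - ω ^ (i : ℕ) = ω ^ (i : ℕ) * (ω ^ ((j : ℕ) - (i : ℕ)) - 1) := by
      rw [mul_sub, mul_one, ← pow_add, Nat.add_sub_cancel' hij.le]
    rw [this]
    exact (hωu.pow _).mul (hωk _ (Nat.sub_pos_of_lt hij)
      (lt_of_le_of_lt (Nat.sub_le _ _) j.isLt))
  have hdet : V.det * (Matrix.circulant v).det = V.det * ∏ j : ZMod n, d j := by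
    rw [← Matrix.det_mul, hCV, Matrix.det_mul, Matrix.det_diagonal, mul_comm]
  exact hVu.mul_left_cancel hdet
end

section
/- Let F_q be a finite field and let n be a positive divisor of q-1. Then for every a ∈ F_q, the number of n×n circulant matrices over F_q with determinant a equals the number of n×n diagonal matrices over F_q with determinant a. In particular, the number of n×n circulant matrices with determinant 0 is q^n - (q-1)^n. -/
open Matrix Finset

/-- Over a finite field with `q` elements, if `n` is a positive divisor of `q - 1`, then for
every `a` the number of `n × n` circulant matrices of determinant `a` equals the number of
`n × n` diagonal matrices of determinant `a`; in particular the number of circulant matrices of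
determinant `0` is `q^n - (q-1)^n`. -/
theorem card_circulant_eq_card_diag {F : Type*} [Field F] [Fintype F] (q n : ℕ)
    (hq : Fintype.card F = q) [NeZero n] (hdvd : n ∣ q - 1) :
    (∀ a : F,
      Nat.card {v : ZMod n → F // (Matrix.circulant v).det = a} =
        Nat.card {v : Fin n → F // ∏ i, v i = a}) ∧
    Nat.card {v : ZMod n → F // (Matrix.circulant v).det = 0} = q ^ n - (q - 1) ^ n := by
  classical
  have hn : n ≠ 0 := NeZero.ne n
  have hq1 : q - 1 ≠ 0 := by
    have : 1 < q := hq ▸ Fintype.one_lt_card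
    omega
  -- a primitive n-th root of unity in Fˣ
  obtain ⟨g, hg⟩ := IsCyclic.exists_ofOrder_eq_natCard (α := Fˣ)
  have hgord : orderOf g = q - 1 := by
    rw [hg, Nat.card_eq_fintype_card, Fintype.card_units, hq]
  set ζ : Fˣ := g ^ ((q - 1) / n) with hζdef
  have hordζ : orderOf ζ = n := by
    rw [hζdef, orderOf_pow, hgord, Nat.gcd_eq_right (Nat.div_dvd_of_dvd hdvd),
      Nat.div_div_self hdvd hq1]
  -- the character
  set e : ZMod n → Fˣ := fun m => ζ ^ m.val with he_def
  have he_congr : ∀ (a b : ℕ), a ≡ b [MOD n] → ζ ^ a = ζ ^ b := by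
    intro a b hab
    rw [pow_eq_pow_iff_modEq, hordζ]; exact hab
  have he_add : ∀ a b : ZMod n, e (a + b) = e a * e b := by
    intro a b
    rw [he_def]
    rw [← pow_add]
    exact he_congr _ _ (by rw [ZMod.val_add]; exact Nat.mod_modEq _ _)
  have he_pow : ∀ (a j : ZMod n), e (a * j) = e a ^ j.val := by
    intro a j
    rw [he_def]
    rw [← pow_mul]
    exact he_congr _ _ (by rw [ZMod.val_mul]; exact Nat.mod_modEq _ _)
  have he_inj : Function.Injective e := by
    intro a b hab
    have h2 : a.val ≡ b.val [MOD orderOf ζ] := pow_eq_pow_iff_modEq.mp hab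
    rw [hordζ] at h2
    have := h2.eq_of_lt_of_lt (ZMod.val_lt a) (ZMod.val_lt b)
    exact ZMod.val_injective n this
  set eF : ZMod n → F := fun m => ((e m : F)) with heF_def
  have heF_add : ∀ a b : ZMod n, eF (a + b) = eF a * eF b := by
    intro a b; rw [heF_def]; simp only; rw [he_add]; push_cast; ring
  have heF_inj : Function.Injective eF := fun a b hab => he_inj (Units.ext hab)
  -- the Fourier matrix
  set V : Matrix (ZMod n) (ZMod n) F := Matrix.of fun i j => eF (i * j) with hV_def
  set σ : Fin n ≃ ZMod n :=
    { toFun := fun i => (i : ZMod n)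
      invFun := fun m => ⟨m.val, m.val_lt⟩
      left_inv := fun i => by
        ext; simp [ZMod.val_cast_of_lt i.is_lt]
      right_inv := fun m => by simp [ZMod.natCast_zmod_val] } with hσ_def
  have hVdet : V.det ≠ 0 := by
    rw [← Matrix.det_submatrix_equiv_self σ V]
    have : V.submatrix σ σ = Matrix.vandermonde (fun i : Fin n => eF (σ i)) := by
      ext i j
      show eF (σ i * σ j) = eF (σ i) ^ (j : ℕ)
      have : (σ j).val = (j : ℕ) := ZMod.val_cast_of_lt j.is_lt
      rw [heF_def]; simp only
      rw [he_pow, this]; push_cast; ring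
    rw [this, Matrix.det_vandermonde_ne_zero_iff]
    exact heF_inj.comp σ.injective
  -- the Fourier transform
  set Φ : (ZMod n → F) → (ZMod n → F) := fun v k => ∑ t, v t * eF (-(t * k)) with hΦ_def
  -- determinant formula
  have hdet : ∀ v : ZMod n → F, (Matrix.circulant v).det = ∏ k, Φ v k := by
    intro v
    have hcomm : Matrix.circulant v * V = V * Matrix.diagonal (Φ v) := by
      ext j k
      rw [Matrix.mul_apply, Matrix.mul_diagonal]
      calc ∑ i, Matrix.circulant v j i * V i k
          = ∑ t, Matrix.circulant v j (Equiv.subLeft j t) * V (Equiv.subLeft j t) k :=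
            ((Equiv.subLeft j).sum_comp fun i => Matrix.circulant v j i * V i k).symm
        _ = ∑ t, v t * (eF (j * k) * eF (-(t * k))) := by
            apply Finset.sum_congr rfl
            intro t _
            rw [Matrix.circulant_apply]
            simp only [Equiv.subLeft_apply, sub_sub_cancel]
            show v t * eF ((j - t) * k) = _
            rw [show (j - t) * k = j * k + -(t * k) by ring, heF_add]
        _ = V j k * Φ v k := by
            show _ = eF (j * k) * Φ v k
            rw [hΦ_def]; simp only
            rw [Finset.mul_sum]
            apply Finset.sum_congr rfl
            intro t _; ring
    have := congrArg Matrix.det hcomm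
    rw [Matrix.det_mul, Matrix.det_mul, Matrix.det_diagonal] at this
    have h2 : (Matrix.circulant v).det * V.det = (∏ k, Φ v k) * V.det := by
      rw [this]; ring
    exact mul_right_cancel₀ hVdet h2
  -- Φ is bijective
  have hΦV : ∀ (v : ZMod n → F) (k : ZMod n), (V *ᵥ v) k = Φ v (-k) := by
    intro v k
    rw [Matrix.mulVec, hΦ_def]
    simp only [dotProduct]
    apply Finset.sum_congr rfl
    intro t _
    show eF (k * t) * v t = v t * eF (-(t * -k))
    rw [show -(t * -k) = k * t by ring]; ring
  have hVinj : Function.Injective (V.mulVec) :=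
    Matrix.mulVec_injective_iff_isUnit.mpr ((Matrix.isUnit_iff_isUnit_det V).mpr
      (isUnit_iff_ne_zero.mpr hVdet))
  have hΦinj : Function.Injective Φ := by
    intro v v' h
    apply hVinj
    funext k
    rw [hΦV, hΦV, h]
  have hΦbij : Function.Bijective Φ := Finite.injective_iff_bijective.mp hΦinj
  have hmain : ∀ a : F,
      Nat.card {v : ZMod n → F // (Matrix.circulant v).det = a} =
        Nat.card {v : Fin n → F // ∏ i, v i = a} := by
    intro a
    have e1 : {v : ZMod n → F // (Matrix.circulant v).det = a} ≃
        {w : ZMod n → F // ∏ k, w k = a} :=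
      (Equiv.ofBijective Φ hΦbij).subtypeEquiv (fun v => by rw [hdet v]; exact Iff.rfl)
    have e2 : {w : ZMod n → F // ∏ k, w k = a} ≃ {v : Fin n → F // ∏ i, v i = a} :=
      { toFun := fun w => ⟨fun i => w.1 (σ i), by rw [Equiv.prod_comp σ w.1]; exact w.2⟩
        invFun := fun v => ⟨fun k => v.1 (σ.symm k), by
          rw [Equiv.prod_comp σ.symm v.1]; exact v.2⟩
        left_inv := fun w => by ext k; simp
        right_inv := fun v => by ext i; simp }
    exact Nat.card_congr (e1.trans e2)
  refine ⟨hmain, ?_⟩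
  rw [hmain 0, Nat.card_eq_fintype_card]
  have hcF : Fintype.card {x : F // ¬ x = 0} = q - 1 := by
    rw [Fintype.card_subtype_compl, Fintype.card_subtype_eq, hq]
  have hne : Fintype.card {v : Fin n → F // ¬ ∏ i, v i = 0} = (q - 1) ^ n := by
    have e3 : {v : Fin n → F // ¬ ∏ i, v i = 0} ≃ (Fin n → {x : F // ¬ x = 0}) :=
      (Equiv.subtypeEquivRight (fun v => by simp [Finset.prod_eq_zero_iff])).trans
        Equiv.subtypePiEquivPi
    rw [Fintype.card_congr e3, Fintype.card_fun, hcF, Fintype.card_fin]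
  have htot : Fintype.card (Fin n → F) = q ^ n := by
    rw [Fintype.card_fun, hq, Fintype.card_fin]
  have hcompl : (q - 1) ^ n = q ^ n - Fintype.card {v : Fin n → F // ∏ i, v i = 0} := by
    rw [← hne, ← htot]
    exact Fintype.card_subtype_compl _
  have hle : Fintype.card {v : Fin n → F // ∏ i, v i = 0} ≤ q ^ n :=
    htot ▸ Fintype.card_subtype_le _
  rw [hcompl, Nat.sub_sub_self hle]
end
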